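/- arXiv:1810.06869 — 6 statements merged into one kernel-verified Lean document; each statement's English description precedes it below -/
import Mathlib

section
/- For a finite weighted graph G with nonnegative coupling constants J_{ij} ≥ 0 and external field h ≥ 0, the Ising measure μ_G(σ) ∝ exp(Σ_{i<j} J_{ij}σ_iσ_j + h Σ_i σ_i) on {-1,1}^{V_G} satisfies the first Griffiths inequality: for any subset A of V_G, the expectation of σ_A = Π_{i∈A} σ_i is nonnegative, i.e. ⟨σ_A⟩_G ≥ 0. -/
open Finset

noncomputable section

/-- The spin value associated to a boolean: `+1` or `-1`. -/
def spin (b : Bool) : ℝ := if b then 1 else -1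

/-- The Ising Hamiltonian (as appearing in the Boltzmann weight) on a finite weighted
graph with couplings `J` (over unordered pairs, encoded via `i < j`) and field `h`. -/
def ham {V : Type*} [Fintype V] [LinearOrder V] (J : V → V → ℝ) (h : ℝ)
    (σ : V → Bool) : ℝ :=
  (∑ i : V, ∑ j : V, if i < j then J i j * spin (σ i) * spin (σ j) else 0)
    + h * ∑ i : V, spin (σ i)

/-- The expectation `⟨σ_A⟩_G` of `σ_A = ∏_{i∈A} σ_i` under the Ising measure
`μ_G(σ) ∝ exp(Σ_{i<j} J_{ij} σ_i σ_j + h Σ_i σ_i)`. -/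
def corr {V : Type*} [Fintype V] [LinearOrder V] (J : V → V → ℝ) (h : ℝ)
    (A : Finset V) : ℝ :=
  (∑ σ : V → Bool, (∏ i ∈ A, spin (σ i)) * Real.exp (ham J h σ)) /
    (∑ σ : V → Bool, Real.exp (ham J h σ))

section Aux

variable {V : Type*} [Fintype V] [LinearOrder V]

/-- A monomial in the spins. -/
def Mono (g : (V → Bool) → ℝ) : Prop :=
  ∃ k : V → ℕ, ∀ σ, g σ = ∏ i : V, spin (σ i) ^ k i

lemma mono_one : Mono (fun _ : V → Bool => (1 : ℝ)) :=
  ⟨fun _ => 0, by simp⟩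

lemma mono_spin (i : V) : Mono (fun σ : V → Bool => spin (σ i)) := by
  refine ⟨fun j => if j = i then 1 else 0, fun σ => ?_⟩
  have : ∀ j : V, spin (σ j) ^ (if j = i then 1 else 0)
      = if j = i then spin (σ j) else 1 := by
    intro j; split <;> simp
  simp only [this, Finset.prod_ite_eq' Finset.univ i (fun j => spin (σ j)),
    Finset.mem_univ, if_true]

lemma mono_mul {g g' : (V → Bool) → ℝ} (hg : Mono g) (hg' : Mono g') :
    Mono (g * g') := by
  obtain ⟨k, hk⟩ := hg
  obtain ⟨k', hk'⟩ := hg'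
  refine ⟨fun i => k i + k' i, fun σ => ?_⟩
  simp only [Pi.mul_apply, hk, hk', pow_add, Finset.prod_mul_distrib]

lemma mono_prod {ι : Type*} (s : Finset ι) (g : ι → (V → Bool) → ℝ)
    (hg : ∀ i ∈ s, Mono (g i)) : Mono (∏ i ∈ s, g i) :=
  Finset.prod_induction g Mono (fun _ _ => mono_mul) mono_one hg

lemma mono_sum_nonneg {g : (V → Bool) → ℝ} (hg : Mono g) :
    0 ≤ ∑ σ : V → Bool, g σ := by
  obtain ⟨k, hk⟩ := hg
  calc (0:ℝ) ≤ ∏ i : V, ∑ b : Bool, spin b ^ k i := by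
        refine Finset.prod_nonneg fun i _ => ?_
        rw [Fintype.sum_bool]
        have ht : spin true = (1:ℝ) := rfl
        have hf : spin false = (-1:ℝ) := rfl
        rw [ht, hf, one_pow]
        rcases Nat.even_or_odd (k i) with he | ho
        · rw [he.neg_one_pow]; norm_num
        · rw [ho.neg_one_pow]; norm_num
    _ = ∑ σ ∈ Fintype.piFinset (fun _ : V => (Finset.univ : Finset Bool)),
          ∏ i : V, spin (σ i) ^ k i := by
        rw [Finset.prod_univ_sum]
    _ = ∑ σ : V → Bool, g σ := by
        rw [Fintype.piFinset_univ]
        exact Finset.sum_congr rfl fun σ _ => (hk σ).symm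

lemma key_nonneg {ι : Type*} [DecidableEq ι] (s : Finset ι) (c d : ι → ℝ)
    (hc : ∀ i, 0 ≤ c i) (hd : ∀ i, 0 ≤ d i) (g : ι → (V → Bool) → ℝ)
    (hg : ∀ i, Mono (g i)) (F : (V → Bool) → ℝ) (hF : Mono F) :
    0 ≤ ∑ σ : V → Bool, F σ * ∏ i ∈ s, (c i + d i * g i σ) := by
  have hrw : ∀ σ : V → Bool, F σ * ∏ i ∈ s, (c i + d i * g i σ)
      = ∑ t ∈ s.powerset, ((∏ i ∈ t, c i) * ∏ i ∈ s \ t, d i)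
          * (F σ * ∏ i ∈ s \ t, g i σ) := by
    intro σ
    rw [Finset.prod_add, Finset.mul_sum]
    refine Finset.sum_congr rfl fun t _ => ?_
    rw [Finset.prod_mul_distrib]; ring
  simp_rw [hrw]
  rw [Finset.sum_comm]
  refine Finset.sum_nonneg fun t _ => ?_
  rw [← Finset.mul_sum]
  refine mul_nonneg (mul_nonneg (Finset.prod_nonneg fun i _ => hc i)
    (Finset.prod_nonneg fun i _ => hd i)) ?_
  have hM : Mono (fun σ : V → Bool => F σ * ∏ i ∈ s \ t, g i σ) := by
    have := mono_mul hF (mono_prod (s \ t) g fun i _ => hg i)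
    convert this using 1
    funext σ
    simp [Finset.prod_apply]
  exact mono_sum_nonneg hM

lemma exp_pm_one (J e : ℝ) (he : e = 1 ∨ e = -1) :
    Real.exp (J * e) = Real.cosh J + Real.sinh J * e := by
  rcases he with rfl | rfl
  · rw [mul_one, mul_one, Real.cosh_add_sinh]
  · rw [mul_neg_one, mul_neg_one, ← Real.cosh_sub_sinh]; ring

lemma spin_pm_one (b : Bool) : spin b = 1 ∨ spin b = -1 := by
  cases b
  · right; rfl
  · left; rfl

lemma exp_spin_pair (J : ℝ) (b c : Bool) :
    Real.exp (J * spin b * spin c)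
      = Real.cosh J + Real.sinh J * (spin b * spin c) := by
  rw [mul_assoc]
  refine exp_pm_one J _ ?_
  rcases spin_pm_one b with hb | hb <;> rcases spin_pm_one c with hc | hc <;>
    rw [hb, hc] <;> norm_num

lemma exp_spin_field (h : ℝ) (b : Bool) :
    Real.exp (h * spin b) = Real.cosh h + Real.sinh h * spin b := by
  exact exp_pm_one h _ (spin_pm_one b)

end Aux

/-- First Griffiths inequality: for nonnegative couplings and nonnegative field,
`⟨σ_A⟩_G ≥ 0` for every `A ⊆ V_G`. -/
theorem griffiths_first {V : Type*} [Fintype V] [LinearOrder V]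
    (J : V → V → ℝ) (hJsymm : ∀ i j, J i j = J j i) (hJ : ∀ i j, 0 ≤ J i j)
    (h : ℝ) (hh : 0 ≤ h) (A : Finset V) :
    0 ≤ corr J h A := by
  unfold corr
  refine div_nonneg ?_ (le_of_lt ?_)
  · -- the numerator
    set P : Finset (V × V) := Finset.univ.filter (fun p : V × V => p.1 < p.2) with hP
    set ι := (V × V) ⊕ V
    set s : Finset ι := P.disjSum Finset.univ with hs
    set c : ι → ℝ := Sum.elim (fun p => Real.cosh (J p.1 p.2)) (fun _ => Real.cosh h)
    set d : ι → ℝ := Sum.elim (fun p => Real.sinh (J p.1 p.2)) (fun _ => Real.sinh h)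
    set g : ι → (V → Bool) → ℝ :=
      Sum.elim (fun p σ => spin (σ p.1) * spin (σ p.2)) (fun i σ => spin (σ i))
    have hexp : ∀ σ : V → Bool,
        Real.exp (ham J h σ) = ∏ x ∈ s, (c x + d x * g x σ) := by
      intro σ
      have h1 : ham J h σ
          = (∑ p ∈ P, J p.1 p.2 * spin (σ p.1) * spin (σ p.2))
            + ∑ i : V, h * spin (σ i) := by
        unfold ham
        rw [hP, Finset.sum_filter, Fintype.sum_prod_type, Finset.mul_sum]
      rw [h1, Real.exp_add, Real.exp_sum, Real.exp_sum, hs,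
        Finset.prod_disjSum]
      congr 1
      · refine Finset.prod_congr rfl fun p _ => ?_
        exact exp_spin_pair (J p.1 p.2) (σ p.1) (σ p.2)
      · refine Finset.prod_congr rfl fun i _ => ?_
        exact exp_spin_field h (σ i)
    calc (0:ℝ) ≤ ∑ σ : V → Bool,
          (∏ i ∈ A, spin (σ i)) * ∏ x ∈ s, (c x + d x * g x σ) := by
          refine key_nonneg s c d ?_ ?_ g ?_ _ ?_
          · rintro (p | i) <;> exact (Real.cosh_pos _).le
          · rintro (p | i)
            · exact Real.sinh_nonneg_iff.mpr (hJ p.1 p.2)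
            · exact Real.sinh_nonneg_iff.mpr hh
          · rintro (p | i)
            · exact mono_mul (mono_spin p.1) (mono_spin p.2)
            · exact mono_spin i
          · have := mono_prod A (fun i (σ : V → Bool) => spin (σ i))
              (fun i _ => mono_spin i)
            convert this using 1
            funext σ
            simp [Finset.prod_apply]
      _ = ∑ σ : V → Bool, (∏ i ∈ A, spin (σ i)) * Real.exp (ham J h σ) := by
          exact Finset.sum_congr rfl fun σ _ => by rw [hexp]
  · -- the denominator
    refine Finset.sum_pos (fun σ _ => Real.exp_pos _) ?_
    exact Finset.univ_nonempty
end
end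

section
/- For a finite weighted graph G with nonnegative couplings and nonnegative external field h, the second Griffiths inequality holds: for any subsets A, B of V_G, ⟨σ_A σ_B⟩_G ≥ ⟨σ_A⟩_G ⟨σ_B⟩_G. -/
open Finset

noncomputable section

set_option linter.unusedSectionVars false

section Aux
variable {V : Type*} [Fintype V] [DecidableEq V]

/-- The monomial `σ_S`. -/
def mono (S : Finset V) (σ : V → Bool) : ℝ := ∏ i ∈ S, spin (σ i)

lemma spin_sq (b : Bool) : spin b * spin b = 1 := by cases b <;> simp [spin]

lemma spin_beq (a b : Bool) : spin (a == b) = spin a * spin b := by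
  cases a <;> cases b <;> norm_num [spin]

lemma mono_sq (S : Finset V) (σ : V → Bool) : mono S σ * mono S σ = 1 := by
  rw [mono, ← Finset.prod_mul_distrib]
  simp [spin_sq]

lemma mono_mul_s1 (S T : Finset V) (σ : V → Bool) :
    mono S σ * mono T σ = mono (symmDiff S T) σ := by
  have h1 : mono S σ * mono T σ = mono (S ∪ T) σ * mono (S ∩ T) σ := by
    rw [mono, mono, mono, mono, Finset.prod_union_inter]
  have h2 : mono (S ∪ T) σ = mono (symmDiff S T) σ * mono (S ∩ T) σ := by
    rw [mono, mono, mono, symmDiff_eq_sup_sdiff_inf]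
    exact (Finset.prod_sdiff (Finset.inter_subset_union (s := S) (t := T))).symm
  rw [h1, h2, mul_assoc, mono_sq, mul_one]

lemma mono_le_one (S : Finset V) (σ : V → Bool) : mono S σ ≤ 1 := by
  have := mono_sq S σ
  nlinarith [sq_nonneg (mono S σ - 1)]

lemma sum_mono_nonneg (S : Finset V) : 0 ≤ ∑ σ : V → Bool, mono S σ := by
  have key : ∀ σ : V → Bool, mono S σ = ∏ i : V, (if i ∈ S then spin (σ i) else 1) := by
    intro σ
    rw [mono, Finset.prod_ite_mem, Finset.univ_inter]
  simp_rw [key]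
  rw [← Fintype.piFinset_univ, ← Finset.prod_univ_sum (t := fun _ => (Finset.univ : Finset Bool)) (f := fun i b => if i ∈ S then spin b else 1)]
  apply Finset.prod_nonneg
  intro i _
  by_cases hi : i ∈ S <;> simp [hi, spin]

/-- The cone of functions with nonnegative Fourier coefficients. -/
def Cone (f : (V → Bool) → ℝ) : Prop :=
  ∃ c : Finset V → ℝ, (∀ S, 0 ≤ c S) ∧ ∀ σ, f σ = ∑ S : Finset V, c S * mono S σ

lemma cone_mono (S : Finset V) : Cone (mono S) := by
  refine ⟨fun T => if T = S then 1 else 0, fun T => by positivity, fun σ => ?_⟩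
  simp [Finset.sum_ite_eq']

lemma cone_add {f g : (V → Bool) → ℝ} (hf : Cone f) (hg : Cone g) :
    Cone (f + g) := by
  obtain ⟨c, hc, hfc⟩ := hf
  obtain ⟨d, hd, hgd⟩ := hg
  refine ⟨c + d, fun S => add_nonneg (hc S) (hd S), fun σ => ?_⟩
  simp [hfc σ, hgd σ, add_mul, Finset.sum_add_distrib]

lemma cone_mul {f g : (V → Bool) → ℝ} (hf : Cone f) (hg : Cone g) :
    Cone (f * g) := by
  obtain ⟨c, hc, hfc⟩ := hf
  obtain ⟨d, hd, hgd⟩ := hg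
  refine ⟨fun U => ∑ S : Finset V, ∑ T : Finset V,
      if symmDiff S T = U then c S * d T else 0,
    fun U => Finset.sum_nonneg fun S _ => Finset.sum_nonneg fun T _ => by
      split
      · exact mul_nonneg (hc S) (hd T)
      · exact le_rfl, fun σ => ?_⟩
  rw [Pi.mul_apply, hfc σ, hgd σ, Finset.sum_mul_sum]
  have rhs : ∑ U : Finset V, (∑ S : Finset V, ∑ T : Finset V,
        if symmDiff S T = U then c S * d T else 0) * mono U σ
      = ∑ S : Finset V, ∑ T : Finset V, c S * d T * mono (symmDiff S T) σ := by
    simp_rw [Finset.sum_mul, ite_mul, zero_mul]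
    rw [Finset.sum_comm]
    refine Finset.sum_congr rfl fun S _ => ?_
    rw [Finset.sum_comm]
    refine Finset.sum_congr rfl fun T _ => ?_
    simp [Finset.sum_ite_eq Finset.univ (symmDiff S T)]
  rw [rhs]
  refine Finset.sum_congr rfl fun S _ => Finset.sum_congr rfl fun T _ => ?_
  rw [← mono_mul_s1]; ring

lemma cone_one : Cone (1 : (V → Bool) → ℝ) := by
  have := cone_mono (∅ : Finset V)
  convert this using 1
  funext σ
  simp [mono]

lemma cone_prod {ι : Type*} (s : Finset ι) (F : ι → (V → Bool) → ℝ)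
    (hF : ∀ i ∈ s, Cone (F i)) : Cone (∏ i ∈ s, F i) :=
  Finset.prod_induction F Cone (fun _ _ => cone_mul) cone_one hF

lemma cone_exp (a : ℝ) (ha : 0 ≤ a) (S : Finset V) :
    Cone (fun σ => Real.exp (a * mono S σ)) := by
  refine ⟨fun T => (if T = ∅ then Real.cosh a else 0) +
      (if T = S then Real.sinh a else 0),
    fun T => add_nonneg (by split; exacts [(Real.cosh_pos a).le, le_rfl])
      (by split; exacts [Real.sinh_nonneg_iff.mpr ha, le_rfl]), fun σ => ?_⟩
  simp_rw [add_mul, Finset.sum_add_distrib, ite_mul, zero_mul,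
    Finset.sum_ite_eq' Finset.univ]
  have hm : mono S σ = 1 ∨ mono S σ = -1 := by
    have h2 := mono_sq S σ
    rcases le_or_gt (mono S σ) 0 with h | h
    · right; nlinarith
    · left; nlinarith
  have h1 : mono (∅ : Finset V) σ = 1 := by simp [mono]
  rcases hm with hm | hm <;>
      simp [hm, h1, Real.cosh_eq, Real.sinh_eq, Real.exp_neg] <;> ring

lemma cone_sum_nonneg {f : (V → Bool) → ℝ} (hf : Cone f) :
    0 ≤ ∑ σ : V → Bool, f σ := by
  obtain ⟨c, hc, hfc⟩ := hf
  simp_rw [hfc]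
  rw [Finset.sum_comm]
  exact Finset.sum_nonneg fun S _ => by
    rw [← Finset.mul_sum]
    exact mul_nonneg (hc S) (sum_mono_nonneg S)

end Aux

section Main
variable {V : Type*} [Fintype V] [LinearOrder V]

/-- Hamiltonian with a site-dependent field. -/
def hamGen (J : V → V → ℝ) (hv : V → ℝ) (σ : V → Bool) : ℝ :=
  (∑ i : V, ∑ j : V, if i < j then J i j * spin (σ i) * spin (σ j) else 0)
    + ∑ i : V, hv i * spin (σ i)

lemma cone_exp_hamGen (J : V → V → ℝ) (hJ : ∀ i j, 0 ≤ J i j)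
    (hv : V → ℝ) (hhv : ∀ i, 0 ≤ hv i) :
    Cone (fun σ => Real.exp (hamGen J hv σ)) := by
  have heq : (fun σ => Real.exp (hamGen J hv σ)) =
      (∏ i : V, ∏ j : V,
        fun σ => Real.exp (if i < j then J i j * spin (σ i) * spin (σ j) else 0)) *
      (∏ i : V, fun σ => Real.exp (hv i * spin (σ i))) := by
    funext σ
    simp only [Pi.mul_apply, Finset.prod_apply, hamGen]
    rw [Real.exp_add, Real.exp_sum, Real.exp_sum]
    congr 1
    exact Finset.prod_congr rfl fun i _ => Real.exp_sum _ _
  rw [heq]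
  refine cone_mul (cone_prod _ _ fun i _ => cone_prod _ _ fun j _ => ?_)
    (cone_prod _ _ fun i _ => ?_)
  · by_cases hij : i < j
    · have : (fun σ : V → Bool =>
          Real.exp (if i < j then J i j * spin (σ i) * spin (σ j) else 0)) =
          fun σ => Real.exp (J i j * mono {i, j} σ) := by
        funext σ
        rw [if_pos hij, mono, Finset.prod_pair (ne_of_lt hij), mul_assoc]
      rw [this]
      exact cone_exp _ (hJ i j) _
    · have : (fun σ : V → Bool =>
          Real.exp (if i < j then J i j * spin (σ i) * spin (σ j) else 0)) =
          (1 : (V → Bool) → ℝ) := by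
        funext σ; rw [if_neg hij, Real.exp_zero]; rfl
      rw [this]; exact cone_one
  · have : (fun σ : V → Bool => Real.exp (hv i * spin (σ i))) =
        fun σ => Real.exp (hv i * mono {i} σ) := by
      funext σ; rw [mono, Finset.prod_singleton]
    rw [this]
    exact cone_exp _ (hhv i) _

lemma mono_flip (B : Finset V) (σ x : V → Bool) :
    mono B (fun i => σ i == x i) = mono B σ * mono B x := by
  rw [mono, mono, mono, ← Finset.prod_mul_distrib]
  exact Finset.prod_congr rfl fun i _ => spin_beq _ _

lemma flip_invol (σ : V → Bool) :
    Function.Involutive (fun x : V → Bool => fun i => (σ i == x i)) := by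
  intro x; funext i; show (σ i == (σ i == x i)) = x i
  cases σ i <;> cases x i <;> rfl

lemma ham_flip (J : V → V → ℝ) (h : ℝ) (σ x : V → Bool) :
    ham J h σ + ham J h (fun i => (σ i == x i)) =
      hamGen (fun i j => J i j * (1 + spin (x i) * spin (x j)))
        (fun i => h * (1 + spin (x i))) σ := by
  have step : ham J h σ + ham J h (fun i => (σ i == x i)) =
      (∑ i : V, ∑ j : V, ((if i < j then J i j * spin (σ i) * spin (σ j) else 0)
        + (if i < j then
            J i j * spin ((σ i == x i : Bool)) * spin ((σ j == x j : Bool))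
          else 0)))
      + ∑ i : V, (h * spin (σ i) + h * spin ((σ i == x i : Bool))) := by
    simp only [ham, Finset.sum_add_distrib, Finset.mul_sum]
    ring
  rw [step, hamGen]
  congr 1
  · refine Finset.sum_congr rfl fun i _ => Finset.sum_congr rfl fun j _ => ?_
    simp only [spin_beq]
    split <;> ring
  · refine Finset.sum_congr rfl fun i _ => ?_
    rw [spin_beq]; ring

lemma spin_mul_ge (a b : Bool) : (-1 : ℝ) ≤ spin a * spin b := by
  cases a <;> cases b <;> norm_num [spin]

lemma spin_ge (a : Bool) : (-1 : ℝ) ≤ spin a := by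
  cases a <;> norm_num [spin]

theorem griffiths_key (J : V → V → ℝ) (hJ : ∀ i j, 0 ≤ J i j)
    (h : ℝ) (hh : 0 ≤ h) (A B : Finset V) :
    (∑ σ : V → Bool, mono A σ * Real.exp (ham J h σ)) *
      (∑ σ : V → Bool, mono B σ * Real.exp (ham J h σ)) ≤
    (∑ σ : V → Bool, (mono A σ * mono B σ) * Real.exp (ham J h σ)) *
      (∑ σ : V → Bool, Real.exp (ham J h σ)) := by
  rw [← sub_nonneg, Finset.sum_mul_sum, Finset.sum_mul_sum,
    ← Finset.sum_sub_distrib]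
  simp_rw [← Finset.sum_sub_distrib]
  have hstep : ∀ σ τ : V → Bool,
      mono A σ * mono B σ * Real.exp (ham J h σ) * Real.exp (ham J h τ)
        - mono A σ * Real.exp (ham J h σ) * (mono B τ * Real.exp (ham J h τ))
      = mono A σ * (mono B σ - mono B τ) * Real.exp (ham J h σ + ham J h τ) := by
    intro σ τ; rw [Real.exp_add]; ring
  simp_rw [hstep]
  have hre : ∀ σ : V → Bool,
      (∑ τ : V → Bool, mono A σ * (mono B σ - mono B τ)
          * Real.exp (ham J h σ + ham J h τ))
      = ∑ x : V → Bool, (1 - mono B x) *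
          (mono A σ * (mono B σ * Real.exp (hamGen
            (fun i j => J i j * (1 + spin (x i) * spin (x j)))
            (fun i => h * (1 + spin (x i))) σ))) := by
    intro σ
    rw [← Function.Bijective.sum_comp ((flip_invol σ).bijective)
      (fun τ => mono A σ * (mono B σ - mono B τ) * Real.exp (ham J h σ + ham J h τ))]
    refine Finset.sum_congr rfl fun x _ => ?_
    rw [mono_flip, ham_flip]
    ring
  simp_rw [hre]
  rw [Finset.sum_comm]
  refine Finset.sum_nonneg fun x _ => ?_
  rw [← Finset.mul_sum]
  refine mul_nonneg (by linarith [mono_le_one B x]) (cone_sum_nonneg ?_)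
  exact cone_mul (cone_mono A) (cone_mul (cone_mono B)
    (cone_exp_hamGen _
      (fun i j => mul_nonneg (hJ i j) (by linarith [spin_mul_ge (x i) (x j)]))
      _ (fun i => mul_nonneg hh (by linarith [spin_ge (x i)]))))

end Main

/-- Second Griffiths inequality: `⟨σ_A σ_B⟩_G ≥ ⟨σ_A⟩_G ⟨σ_B⟩_G` for nonnegative
couplings and nonnegative field.  Note `σ_A σ_B = ∏_{i∈A}σ_i · ∏_{j∈B}σ_j`. -/
theorem griffiths_second {V : Type*} [Fintype V] [LinearOrder V]
    (J : V → V → ℝ) (hJsymm : ∀ i j, J i j = J j i) (hJ : ∀ i j, 0 ≤ J i j)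
    (h : ℝ) (hh : 0 ≤ h) (A B : Finset V) :
    corr J h A * corr J h B ≤
      (∑ σ : V → Bool, ((∏ i ∈ A, spin (σ i)) * (∏ j ∈ B, spin (σ j))) *
          Real.exp (ham J h σ)) /
        (∑ σ : V → Bool, Real.exp (ham J h σ)) := by
  have hZ : 0 < ∑ σ : V → Bool, Real.exp (ham J h σ) :=
    Finset.sum_pos (fun σ _ => Real.exp_pos _) ⟨fun _ => true, Finset.mem_univ _⟩
  have key := griffiths_key J hJ h hh A B
  simp only [mono] at key
  rw [corr, corr, div_mul_div_comm, div_le_div_iff₀ (by positivity) hZ]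
  calc (∑ σ : V → Bool, (∏ i ∈ A, spin (σ i)) * Real.exp (ham J h σ)) *
        (∑ σ : V → Bool, (∏ i ∈ B, spin (σ i)) * Real.exp (ham J h σ)) *
        (∑ σ : V → Bool, Real.exp (ham J h σ))
      ≤ (∑ σ : V → Bool, ((∏ i ∈ A, spin (σ i)) * ∏ i ∈ B, spin (σ i)) *
          Real.exp (ham J h σ)) * (∑ σ : V → Bool, Real.exp (ham J h σ)) *
          (∑ σ : V → Bool, Real.exp (ham J h σ)) :=
        mul_le_mul_of_nonneg_right key hZ.le
    _ = (∑ σ : V → Bool, ((∏ i ∈ A, spin (σ i)) * ∏ j ∈ B, spin (σ j)) *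
          Real.exp (ham J h σ)) * ((∑ σ : V → Bool, Real.exp (ham J h σ)) *
          (∑ σ : V → Bool, Real.exp (ham J h σ))) := by ring
end
end

section
/- Let ξ be a norm on ℝ^d, let K_ξ = {t ∈ ℝ^d : (t,s) ≤ ξ(s) for all s ∈ S^{d-1}} be its Wulff shape, and for t ∈ ∂K_ξ and δ ∈ (0,1) define the forward cone Y^◁_δ(t) = {x ∈ ℝ^d : (t,x) > (1-δ)ξ(x)} and backward cone Y^▶_δ(t) = -Y^◁_δ(t). Let A ⊂ ℝ^d be bounded and let δ, δ' > 0 with δ + δ' < 1. Then the set V = {x ∈ ℝ^d : A δ-sees x and A (δ+δ')-blocks x} is bounded, where 'A δ-sees x' means there exists y ∈ A with x ∈ y + Y^◁_δ(t), and 'A δ-blocks x' means A is not contained in x + Y^▶_δ(t). -/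
open Finset

/-- Geometric lemma (Lemma B.2): let `ξ` be a norm on `ℝ^d`, `t` a point of the
boundary of the Wulff shape `K_ξ` (i.e. `(t,x) ≤ ξ(x)` for all `x`, with equality
for some `x ≠ 0`), and define the forward cone `Y^◁_δ = {x : (t,x) > (1-δ)ξ(x)}`
and the backward cone `Y^▶_δ = -Y^◁_δ`.  If `A ⊆ ℝ^d` is bounded and
`δ, δ' > 0` with `δ + δ' < 1`, then the set of `x` which are `δ`-seen by `A`
(i.e. `x ∈ y + Y^◁_δ` for some `y ∈ A`) and `(δ+δ')`-blocked by `A`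
(i.e. `A ⊄ x + Y^▶_{δ+δ'}`) is bounded. -/
theorem bounded_seen_and_blocked {d : ℕ}
    (ξ : (Fin d → ℝ) → ℝ)
    (hpos : ∀ x, x ≠ 0 → 0 < ξ x)
    (hhom : ∀ (c : ℝ) (x), ξ (c • x) = |c| * ξ x)
    (htri : ∀ x y, ξ (x + y) ≤ ξ x + ξ y)
    (t : Fin d → ℝ)
    (ht : ∀ x, (∑ i, t i * x i) ≤ ξ x)
    (ht' : ∃ x, x ≠ 0 ∧ (∑ i, t i * x i) = ξ x)
    (δ δ' : ℝ) (hδ : 0 < δ) (hδ' : 0 < δ') (hδδ' : δ + δ' < 1)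
    (A : Set (Fin d → ℝ)) (hA : Bornology.IsBounded A) :
    Bornology.IsBounded {x : Fin d → ℝ |
      (∃ y ∈ A, (1 - δ) * ξ (x - y) < ∑ i, t i * (x - y) i) ∧
      ¬ (A ⊆ {z : Fin d → ℝ | (1 - (δ + δ')) * ξ (x - z) < ∑ i, t i * (x - z) i})} := by
  -- basic properties of ξ
  have ξ0 : ξ 0 = 0 := by simpa using hhom 0 0
  have ξnonneg : ∀ x, 0 ≤ ξ x := by
    intro x
    by_cases h : x = 0
    · simp [h, ξ0]
    · exact (hpos x h).le
  have ξneg : ∀ x, ξ (-x) = ξ x := by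
    intro x; simpa using hhom (-1) x
  -- subadditivity over finite sums
  have hsum : ∀ (s : Finset (Fin d)) (g : Fin d → (Fin d → ℝ)),
      ξ (∑ i ∈ s, g i) ≤ ∑ i ∈ s, ξ (g i) := by
    intro s g
    induction s using Finset.induction with
    | empty => simp [ξ0]
    | insert _ _ h ih =>
      rw [Finset.sum_insert h, Finset.sum_insert h]
      exact le_trans (htri _ _) (by linarith)
  -- upper bound : ξ x ≤ M * ‖x‖
  set M : ℝ := ∑ i, ξ (Pi.single i (1:ℝ)) with hMdef
  have hMnonneg : 0 ≤ M := Finset.sum_nonneg fun i _ => ξnonneg _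
  have hM : ∀ x, ξ x ≤ M * ‖x‖ := by
    intro x
    have hxdecomp : x = ∑ i, x i • (Pi.single i (1:ℝ) : Fin d → ℝ) := by
      funext j
      simp [Finset.sum_apply, Pi.single_apply]
    calc ξ x = ξ (∑ i, x i • (Pi.single i (1:ℝ) : Fin d → ℝ)) := by rw [← hxdecomp]
      _ ≤ ∑ i, ξ (x i • (Pi.single i (1:ℝ) : Fin d → ℝ)) := hsum _ _
      _ = ∑ i, |x i| * ξ (Pi.single i (1:ℝ)) := by
          exact Finset.sum_congr rfl fun i _ => hhom _ _
      _ ≤ ∑ i, ‖x‖ * ξ (Pi.single i (1:ℝ)) := by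
          refine Finset.sum_le_sum fun i _ => ?_
          have h1 : |x i| ≤ ‖x‖ := by
            simpa [Real.norm_eq_abs] using norm_le_pi_norm x i
          exact mul_le_mul_of_nonneg_right h1 (ξnonneg _)
      _ = M * ‖x‖ := by rw [← Finset.mul_sum, mul_comm]
  -- continuity of ξ
  have hcont : Continuous ξ := by
    refine (LipschitzWith.of_dist_le_mul (K := M.toNNReal) (f := ξ) ?_).continuous
    intro x y
    have h1 : ξ x - ξ y ≤ ξ (x - y) := by
      have := htri (x - y) y
      simp only [sub_add_cancel] at this
      linarith
    have h2 : ξ y - ξ x ≤ ξ (x - y) := by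
      have := htri (y - x) x
      simp only [sub_add_cancel] at this
      have hneg : ξ (y - x) = ξ (x - y) := by rw [← ξneg (y - x), neg_sub]
      linarith
    have habs : dist (ξ x) (ξ y) ≤ ξ (x - y) := by
      rw [Real.dist_eq, abs_sub_le_iff]; exact ⟨h1, h2⟩
    have : ξ (x - y) ≤ M * ‖x - y‖ := hM _
    have hMle : M ≤ (M.toNNReal : ℝ) := by simp [Real.coe_toNNReal', le_max_left]
    calc dist (ξ x) (ξ y) ≤ M * ‖x - y‖ := le_trans habs this
      _ ≤ (M.toNNReal : ℝ) * ‖x - y‖ := by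
          exact mul_le_mul_of_nonneg_right hMle (norm_nonneg _)
      _ = (M.toNNReal : ℝ) * dist x y := by rw [dist_eq_norm]
  -- lower bound : c * ‖x‖ ≤ ξ x with c > 0
  obtain ⟨x₀, hx₀ne, -⟩ := ht'
  have hx₀norm : ‖x₀‖ ≠ 0 := norm_ne_zero_iff.mpr hx₀ne
  have hsphere_ne : (Metric.sphere (0 : Fin d → ℝ) 1).Nonempty := by
    refine ⟨‖x₀‖⁻¹ • x₀, ?_⟩
    simp [norm_smul, abs_of_nonneg (inv_nonneg.mpr (norm_nonneg x₀)),
      inv_mul_cancel₀ hx₀norm]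
  obtain ⟨xm, hxm_mem, hxm_min⟩ :=
    (isCompact_sphere (0 : Fin d → ℝ) 1).exists_isMinOn hsphere_ne hcont.continuousOn
  have hxm_norm : ‖xm‖ = 1 := by simpa using hxm_mem
  have hxm_ne : xm ≠ 0 := by
    intro h; rw [h] at hxm_norm; simp at hxm_norm
  set c : ℝ := ξ xm with hcdef
  have hc : 0 < c := hpos _ hxm_ne
  have hlow : ∀ x, c * ‖x‖ ≤ ξ x := by
    intro x
    by_cases h : x = 0
    · simp [h, ξ0]
    · have hn : ‖x‖ ≠ 0 := norm_ne_zero_iff.mpr h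
      have hmem : ‖x‖⁻¹ • x ∈ Metric.sphere (0 : Fin d → ℝ) 1 := by
        simp [norm_smul, abs_of_nonneg (inv_nonneg.mpr (norm_nonneg x)),
          inv_mul_cancel₀ hn]
      have hval : ξ (‖x‖⁻¹ • x) = ‖x‖⁻¹ * ξ x := by
        rw [hhom, abs_of_nonneg (inv_nonneg.mpr (norm_nonneg x))]
      have hle : c ≤ ‖x‖⁻¹ * ξ x := by
        have h5 := hxm_min hmem
        simpa [hval] using h5
      have hnpos : 0 < ‖x‖ := lt_of_le_of_ne (norm_nonneg x) (Ne.symm hn)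
      calc c * ‖x‖ ≤ (‖x‖⁻¹ * ξ x) * ‖x‖ :=
            mul_le_mul_of_nonneg_right hle (norm_nonneg x)
        _ = ξ x := by field_simp
  -- bound on A
  obtain ⟨C, hC⟩ := hA.subset_closedBall 0
  have hCA : ∀ a ∈ A, ‖a‖ ≤ C := by
    intro a ha
    have := hC ha
    simpa [Metric.mem_closedBall, dist_zero_right] using this
  -- conclude
  have hcδ' : 0 < c * δ' := mul_pos hc hδ'
  refine (Metric.isBounded_closedBall (x := (0 : Fin d → ℝ))
    (r := C + 4 * M * C / (c * δ'))).subset ?_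
  rintro x ⟨⟨y, hyA, hy⟩, hblock⟩
  obtain ⟨z, hzA, hz⟩ := Set.not_subset.mp hblock
  have hz' : (∑ i, t i * (x - z) i) ≤ (1 - (δ + δ')) * ξ (x - z) := not_lt.mp hz
  have hyC : ‖y‖ ≤ C := hCA y hyA
  have hzC : ‖z‖ ≤ C := hCA z hzA
  have hC0 : 0 ≤ C := le_trans (norm_nonneg y) hyC
  -- linearity of the sum
  have hlin : (∑ i, t i * (x - z) i)
      = (∑ i, t i * (x - y) i) + ∑ i, t i * (y - z) i := by
    rw [← Finset.sum_add_distrib]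
    refine Finset.sum_congr rfl fun i _ => ?_
    simp only [Pi.sub_apply]; ring
  have hzy_eq : (∑ i, t i * (z - y) i) = -(∑ i, t i * (y - z) i) := by
    rw [← Finset.sum_neg_distrib]
    refine Finset.sum_congr rfl fun i _ => ?_
    simp only [Pi.sub_apply]; ring
  have hfyz : -(ξ (y - z)) ≤ ∑ i, t i * (y - z) i := by
    have h1 := ht (z - y)
    rw [hzy_eq] at h1
    have h2 : ξ (z - y) = ξ (y - z) := by rw [← ξneg (z - y), neg_sub]
    linarith
  have hxz_tri : ξ (x - z) ≤ ξ (x - y) + ξ (y - z) := by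
    have := htri (x - y) (y - z)
    simpa [sub_add_sub_cancel] using this
  have ha0 : 0 ≤ ξ (x - y) := ξnonneg _
  have hb0 : 0 ≤ ξ (y - z) := ξnonneg _
  have h3 : (1 - (δ + δ')) * ξ (x - z) ≤ (1 - (δ + δ')) * (ξ (x - y) + ξ (y - z)) :=
    mul_le_mul_of_nonneg_left hxz_tri (by linarith)
  have hkey : δ' * ξ (x - y) < 2 * ξ (y - z) := by
    nlinarith [mul_nonneg hδ.le hb0, mul_nonneg hδ'.le hb0]
  have hbM : ξ (y - z) ≤ 2 * M * C := by
    calc ξ (y - z) ≤ M * ‖y - z‖ := hM _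
      _ ≤ M * (‖y‖ + ‖z‖) := mul_le_mul_of_nonneg_left (norm_sub_le _ _) hMnonneg
      _ ≤ M * (C + C) := mul_le_mul_of_nonneg_left (by linarith) hMnonneg
      _ = 2 * M * C := by ring
  have hxy_bound : ‖x - y‖ ≤ 4 * M * C / (c * δ') := by
    rw [le_div_iff₀ hcδ']
    have h4 : c * ‖x - y‖ ≤ ξ (x - y) := hlow _
    nlinarith [norm_nonneg (x - y)]
  have hx_norm : ‖x‖ ≤ ‖y‖ + ‖x - y‖ := by
    have hxeq : x = y + (x - y) := by abel
    calc ‖x‖ = ‖y + (x - y)‖ := by rw [← hxeq]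
      _ ≤ ‖y‖ + ‖x - y‖ := norm_add_le _ _
  simp only [Metric.mem_closedBall, dist_zero_right]
  linarith
end

section
/- Switching Lemma for random currents: Let G = (V_G, J) be a finite weighted graph, A, B ⊂ V_G sets of even cardinality, and F a function of currents. Then Σ_{∂n=A} Σ_{∂m=B} w(n)w(m) F(n+m) = Σ_{∂n=AΔB} Σ_{∂m=∅} w(n)w(m) F(n+m) 1[n+m ∈ E_B], where E_B is the event that in the multigraph induced by edges e with (n+m)_e > 0, every connected component contains an even number of vertices of B, and w(n) = Π_e J_e^{n_e}/n_e!. -/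
open Finset Classical
open scoped symmDiff

noncomputable section

/-- The weight `w(n) = ∏_e J_e^{n_e}/n_e!` of a current `n`, as an extended real. -/
def curWeight {E : Type*} [Fintype E] (J : E → ℝ) (n : E → ℕ) : ENNReal :=
  ∏ e : E, ENNReal.ofReal (J e ^ n e / (Nat.factorial (n e)))

/-- The sources `∂n` of a current `n` on a graph with edge-endpoint map `ends`:
the vertices with odd total incident current. -/
def curSources {V E : Type*} [Fintype V] [Fintype E] [DecidableEq V]
    (ends : E → Sym2 V) (n : E → ℕ) : Finset V :=
  Finset.univ.filter (fun v => Odd (∑ e : E, if v ∈ ends e then n e else 0))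

/-- Connectivity of two vertices in the percolation configuration of edges carrying
positive current. -/
def connectedIn {V E : Type*} (ends : E → Sym2 V) (ω : E → ℕ) (u v : V) : Prop :=
  Relation.ReflTransGen (fun a b => ∃ e, 0 < ω e ∧ ends e = s(a, b)) u v

/-- The event `E_B`: every cluster of the configuration `ω` contains an even number
of vertices of `B`. -/
def evenClusters {V E : Type*} (ends : E → Sym2 V) (ω : E → ℕ) (B : Finset V) : Prop :=
  ∀ v : V, Even {b ∈ (B : Set V) | connectedIn ends ω v b}.ncard

section Aux

variable {V E : Type*} [Fintype V] [Fintype E] [DecidableEq V]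

lemma sum_symmDiff_mod {α : Type*} [DecidableEq α] (S T : Finset α) (f : α → ℕ) :
    (∑ x ∈ S ∆ T, f x) % 2 = (∑ x ∈ S, f x + ∑ x ∈ T, f x) % 2 := by
  have h2 : ∑ x ∈ (S ∪ T) \ (S ∩ T), f x + ∑ x ∈ S ∩ T, f x = ∑ x ∈ S ∪ T, f x :=
    Finset.sum_sdiff (Finset.inter_subset_union)
  have h3 : ∑ x ∈ S ∪ T, f x + ∑ x ∈ S ∩ T, f x = ∑ x ∈ S, f x + ∑ x ∈ T, f x :=
    Finset.sum_union_inter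
  have h1 : S ∆ T = (S ∪ T) \ (S ∩ T) := by
    rw [symmDiff_eq_sup_sdiff_inf, Finset.sup_eq_union, Finset.inf_eq_inter]
  rw [h1]
  omega

variable (ends : E → Sym2 V)

lemma mem_curSources {n : E → ℕ} {v : V} :
    v ∈ curSources ends n ↔ Odd (∑ e : E, if v ∈ ends e then n e else 0) := by
  simp [curSources]

lemma curSources_sub {n k : E → ℕ} (h : ∀ e, n e ≤ k e) :
    curSources ends (k - n) = curSources ends k ∆ curSources ends n := by
  ext v
  have hs : (∑ e : E, if v ∈ ends e then (k - n) e else 0)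
      + (∑ e : E, if v ∈ ends e then n e else 0)
      = ∑ e : E, if v ∈ ends e then k e else 0 := by
    rw [← Finset.sum_add_distrib]
    refine Finset.sum_congr rfl fun e _ => ?_
    by_cases h' : v ∈ ends e <;> simp [h', Pi.sub_apply, Nat.sub_add_cancel (h e)]
  simp only [Finset.mem_symmDiff, mem_curSources, Nat.odd_iff] at *
  omega

end Aux

set_option linter.unusedSectionVars false
set_option linter.unusedVariables false

section Multi

variable {V E : Type*} [Fintype V] [Fintype E] [DecidableEq V] (ends : E → Sym2 V) (k : E → ℕ)

/-- Edges of the multigraph obtained by replacing edge `e` with `k e` parallel copies. -/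
abbrev mEdge (k : E → ℕ) : Type _ := Σ e : E, Fin (k e)

/-- Fiber counts of a set of multigraph edges. -/
def mPhi (S : Finset (mEdge k)) : E → ℕ :=
  fun e => (Finset.univ.filter fun i : Fin (k e) => (⟨e, i⟩ : mEdge k) ∈ S).card

/-- Boundary (mod-2 sources) of a set of multigraph edges. -/
def mbnd (S : Finset (mEdge k)) : Finset V :=
  Finset.univ.filter fun v => Odd (∑ x ∈ S, if v ∈ ends x.1 then 1 else 0)

lemma mPhi_le (S : Finset (mEdge k)) (e : E) : mPhi k S e ≤ k e :=
  le_trans (Finset.card_filter_le _ _) (by simp)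

lemma sigma_split (S : Finset (mEdge k)) :
    S = Finset.univ.sigma (fun e => Finset.univ.filter fun i => (⟨e, i⟩ : mEdge k) ∈ S) := by
  ext ⟨e, i⟩; simp

lemma sum_mEdge (S : Finset (mEdge k)) (f : E → ℕ) :
    ∑ x ∈ S, f x.1 = ∑ e : E, mPhi k S e * f e := by
  conv_lhs => rw [sigma_split k S]
  rw [Finset.sum_sigma]
  exact Finset.sum_congr rfl fun e _ => by simp [mPhi, mul_comm]

lemma mbnd_eq (S : Finset (mEdge k)) : mbnd ends k S = curSources ends (mPhi k S) := by
  ext v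
  simp only [mbnd, Finset.mem_filter, Finset.mem_univ, true_and, mem_curSources]
  have h : (∑ x ∈ S, if v ∈ ends x.1 then 1 else 0)
      = ∑ e : E, (if v ∈ ends e then mPhi k S e else 0) := by
    rw [sum_mEdge k S (fun e => if v ∈ ends e then 1 else 0)]
    exact Finset.sum_congr rfl fun e _ => by by_cases h' : v ∈ ends e <;> simp [h']
  rw [h]

lemma mbnd_symmDiff (S T : Finset (mEdge k)) :
    mbnd ends k (S ∆ T) = mbnd ends k S ∆ mbnd ends k T := by
  ext v
  have h := sum_symmDiff_mod S T (fun x : mEdge k => if v ∈ ends x.1 then 1 else 0)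
  simp only [mbnd, Finset.mem_symmDiff, Finset.mem_filter, Finset.mem_univ, true_and,
    Nat.odd_iff] at *
  omega

lemma mbnd_empty : mbnd ends k ∅ = ∅ := by
  ext v; simp [mbnd]

lemma mbnd_univ : mbnd ends k Finset.univ = curSources ends k := by
  rw [mbnd_eq]
  congr 1
  funext e
  simp [mPhi]

lemma pair_symmDiff {a b : V} (hab : a ≠ b) : ({a} : Finset V) ∆ {b} = {a, b} := by
  ext v
  simp only [Finset.mem_symmDiff, Finset.mem_singleton, Finset.mem_insert]
  constructor
  · rintro (⟨rfl, -⟩ | ⟨rfl, -⟩) <;> simp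
  · rintro (rfl | rfl)
    · exact Or.inl ⟨rfl, hab⟩
    · exact Or.inr ⟨rfl, fun h => hab h.symm⟩

lemma mbnd_single (x : mEdge k) {a b : V} (hab : a ≠ b) (hx : ends x.1 = s(a, b)) :
    mbnd ends k {x} = {a, b} := by
  ext v
  simp only [mbnd, Finset.mem_filter, Finset.mem_univ, true_and, Finset.sum_singleton, hx,
    Sym2.mem_iff, Finset.mem_insert, Finset.mem_singleton]
  by_cases h : v = a ∨ v = b <;> simp [h]

lemma connectedIn_symm {ω : E → ℕ} : Symmetric (connectedIn ends ω) :=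
  fun a b h => @Std.Symm.symm _ _ (@Relation.ReflTransGen.stdSymm _ _
    ⟨fun a b ⟨e, he, h⟩ => ⟨e, he, h.trans (Sym2.eq_swap)⟩⟩) a b h

lemma exists_path (hnd : ∀ e, ¬ (ends e).IsDiag) {u v : V} (h : connectedIn ends k u v) :
    ∃ P : Finset (mEdge k), mbnd ends k P = ({u} : Finset V) ∆ {v} := by
  induction h with
  | refl => exact ⟨∅, by rw [mbnd_empty, symmDiff_self]; rfl⟩
  | @tail b c _ hbc ih =>
    obtain ⟨P, hP⟩ := ih
    obtain ⟨e, he, hends⟩ := hbc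
    have hbcne : b ≠ c := fun h => hnd e (by rw [hends]; exact Sym2.mk_isDiag_iff.mpr h)
    refine ⟨P ∆ {⟨e, ⟨0, he⟩⟩}, ?_⟩
    rw [mbnd_symmDiff, hP, mbnd_single ends k _ hbcne hends, ← pair_symmDiff hbcne,
      symmDiff_assoc, symmDiff_symmDiff_cancel_left]

end Multi

section Exist

variable {V E : Type*} [Fintype V] [Fintype E] [DecidableEq V] (ends : E → Sym2 V) (k : E → ℕ)

lemma evenClusters_iff (B : Finset V) :
    evenClusters ends k B ↔
      ∀ v, Even ((B.filter fun b => connectedIn ends k v b).card) := by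
  unfold evenClusters
  refine forall_congr' fun v => ?_
  have h : {b ∈ (B : Set V) | connectedIn ends k v b}
      = ↑(B.filter fun b => connectedIn ends k v b) := by
    ext x; simp
  rw [h, Set.ncard_coe_finset]

lemma exists_mbnd_aux (hnd : ∀ e, ¬ (ends e).IsDiag) :
    ∀ N (B : Finset V), B.card ≤ N →
      (∀ v, Even ((B.filter fun b => connectedIn ends k v b).card)) →
      ∃ M : Finset (mEdge k), mbnd ends k M = B := by
  intro N
  induction N with
  | zero =>
    intro B hB _
    rw [Nat.le_zero, Finset.card_eq_zero] at hB
    exact ⟨∅, by rw [mbnd_empty, hB]⟩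
  | succ N ih =>
    intro B hB hEv
    rcases B.eq_empty_or_nonempty with rfl | ⟨b, hb⟩
    · exact ⟨∅, mbnd_empty ends k⟩
    · have hEb := hEv b
      have hbBb : b ∈ B.filter fun x => connectedIn ends k b x :=
        Finset.mem_filter.mpr ⟨hb, Relation.ReflTransGen.refl⟩
      have hex : ∃ c ∈ B.filter fun x => connectedIn ends k b x, c ≠ b := by
        by_contra hcon
        push_neg at hcon
        have h1 : (B.filter fun x => connectedIn ends k b x) = {b} := by
          apply Finset.eq_singleton_iff_unique_mem.mpr
          exact ⟨hbBb, fun x hx => hcon x hx⟩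
        rw [h1] at hEb
        simp at hEb
      obtain ⟨c, hc, hcb⟩ := hex
      have hconn : connectedIn ends k b c := (Finset.mem_filter.mp hc).2
      have hcB : c ∈ B := (Finset.mem_filter.mp hc).1
      have hbcne : b ≠ c := fun h => hcb h.symm
      obtain ⟨P, hP⟩ := exists_path ends k hnd hconn
      rw [pair_symmDiff hbcne] at hP
      set B' := B \ {b, c} with hB'def
      have hsub : ({b, c} : Finset V) ⊆ B := by
        intro x hx
        rcases Finset.mem_insert.mp hx with rfl | hx
        · exact hb
        · rw [Finset.mem_singleton.mp hx]; exact hcB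
      have hcard2 : ({b, c} : Finset V).card = 2 := Finset.card_pair hbcne
      have hcardB' : B'.card + 2 = B.card := by
        rw [hB'def, Finset.card_sdiff_of_subset hsub, hcard2]
        have := Finset.card_le_card hsub
        omega
      have hB'le : B'.card ≤ N := by omega
      have hEv' : ∀ v, Even ((B'.filter fun x => connectedIn ends k v x).card) := by
        intro v
        by_cases hvb : connectedIn ends k v b
        · have hvc : connectedIn ends k v c := hvb.trans hconn
          have hfil : (B'.filter fun x => connectedIn ends k v x)
              = (B.filter fun x => connectedIn ends k v x) \ {b, c} := by
            ext x
            simp only [hB'def, Finset.mem_filter, Finset.mem_sdiff, Finset.mem_insert,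
              Finset.mem_singleton]
            tauto
          have hsub2 : ({b, c} : Finset V) ⊆ B.filter fun x => connectedIn ends k v x := by
            intro x hx
            rcases Finset.mem_insert.mp hx with rfl | hx
            · exact Finset.mem_filter.mpr ⟨hb, hvb⟩
            · rw [Finset.mem_singleton.mp hx]
              exact Finset.mem_filter.mpr ⟨hcB, hvc⟩
          rw [hfil, Finset.card_sdiff_of_subset hsub2, hcard2]
          have h2 := Finset.card_le_card hsub2
          have := hEv v
          rw [Nat.even_sub (by omega)]
          simp [this]
        · have hvc : ¬ connectedIn ends k v c := fun h =>
            hvb (h.trans (connectedIn_symm ends hconn))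
          have hfil : (B'.filter fun x => connectedIn ends k v x)
              = B.filter fun x => connectedIn ends k v x := by
            ext x
            simp only [hB'def, Finset.mem_filter, Finset.mem_sdiff, Finset.mem_insert,
              Finset.mem_singleton]
            constructor
            · tauto
            · rintro ⟨hxB, hxc⟩
              refine ⟨⟨hxB, ?_⟩, hxc⟩
              rintro (rfl | rfl)
              · exact hvb hxc
              · exact hvc hxc
          rw [hfil]; exact hEv v
      obtain ⟨M', hM'⟩ := ih B' hB'le hEv'
      refine ⟨M' ∆ P, ?_⟩
      rw [mbnd_symmDiff, hM', hP, hB'def, sdiff_symmDiff_eq_sup]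
      rw [Finset.sup_eq_union]
      exact Finset.union_eq_left.mpr hsub

lemma mbnd_evenClusters (hnd : ∀ e, ¬ (ends e).IsDiag) (M : Finset (mEdge k)) :
    evenClusters ends k (mbnd ends k M) := by
  rw [evenClusters_iff]
  intro v
  set C := Finset.univ.filter fun x => connectedIn ends k v x with hC
  have hCB : ((mbnd ends k M).filter fun x => connectedIn ends k v x)
      = C.filter fun x => Odd (∑ y ∈ M, if x ∈ ends y.1 then 1 else 0) := by
    ext x
    simp only [mbnd, hC, Finset.mem_filter, Finset.mem_univ, true_and]
    tauto
  rw [hCB, ← Finset.even_sum_iff_even_card_odd, Finset.sum_comm]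
  apply Finset.even_sum
  intro y hy
  obtain ⟨⟨a, b⟩, hab⟩ := Quot.exists_rep (ends y.1)
  have hab' : ends y.1 = s(a, b) := hab.symm
  have habne : a ≠ b := fun h => hnd y.1 (by rw [hab']; exact Sym2.mk_isDiag_iff.mpr h)
  have hconnab : connectedIn ends k a b :=
    Relation.ReflTransGen.single ⟨y.1, y.2.pos, hab'⟩
  have hsum : (∑ x ∈ C, if x ∈ ends y.1 then 1 else 0)
      = (C.filter fun x => x ∈ ends y.1).card := (Finset.card_filter _ _).symm
  rw [hsum]
  by_cases ha : a ∈ C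
  · have hvb : connectedIn ends k v b := (Finset.mem_filter.mp ha).2.trans hconnab
    have hb : b ∈ C := Finset.mem_filter.mpr ⟨Finset.mem_univ b, hvb⟩
    have : (C.filter fun x => x ∈ ends y.1) = {a, b} := by
      ext x
      simp only [Finset.mem_filter, hab', Sym2.mem_iff, Finset.mem_insert, Finset.mem_singleton]
      constructor
      · tauto
      · rintro (rfl | rfl)
        · exact ⟨ha, Or.inl rfl⟩
        · exact ⟨hb, Or.inr rfl⟩
    rw [this, Finset.card_pair habne]
    exact even_two
  · have hb : b ∉ C := by
      intro hb
      exact ha (Finset.mem_filter.mpr ⟨Finset.mem_univ a,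
        (Finset.mem_filter.mp hb).2.trans (connectedIn_symm ends hconnab)⟩)
    have : (C.filter fun x => x ∈ ends y.1) = ∅ := by
      ext x
      simp only [Finset.mem_filter, hab', Sym2.mem_iff, Finset.notMem_empty, iff_false]
      rintro ⟨hx, rfl | rfl⟩
      · exact ha hx
      · exact hb hx
    rw [this]
    simp

end Exist

section Count

variable {V E : Type*} [Fintype V] [Fintype E] [DecidableEq V] (ends : E → Sym2 V) (k : E → ℕ)

/-- The equivalence between subsets of multigraph edges and families of fibers. -/
def mSplitEquiv : Finset (mEdge k) ≃ ∀ e : E, Finset (Fin (k e)) where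
  toFun := fun S e => Finset.univ.filter fun i => (⟨e, i⟩ : mEdge k) ∈ S
  invFun := fun f => Finset.univ.filter fun x => x.2 ∈ f x.1
  left_inv := fun S => by ext ⟨e, i⟩; simp
  right_inv := fun f => by funext e; ext i; simp

lemma card_finset_card_eq (K m : ℕ) :
    Fintype.card {t : Finset (Fin K) // t.card = m} = K.choose m := by
  classical
  rw [Fintype.card_subtype]
  have h : (Finset.univ : Finset (Finset (Fin K))).filter (fun t => t.card = m)
      = Finset.powersetCard m Finset.univ := by
    rw [Finset.powersetCard_eq_filter, Finset.powerset_univ]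
  rw [h, Finset.card_powersetCard, Finset.card_univ, Fintype.card_fin]

lemma card_fiber (n : E → ℕ) :
    ((Finset.univ : Finset (Finset (mEdge k))).filter fun S => mPhi k S = n).card
      = ∏ e : E, (k e).choose (n e) := by
  classical
  rw [← Fintype.card_subtype]
  have e1 : {S : Finset (mEdge k) // mPhi k S = n}
      ≃ {f : ∀ e : E, Finset (Fin (k e)) // ∀ e, (f e).card = n e} := by
    refine Equiv.subtypeEquiv (mSplitEquiv k) fun S => ?_
    rw [funext_iff]
    exact Iff.rfl
  have e2 := e1.trans (Equiv.subtypePiEquivPi (p := fun e (t : Finset (Fin (k e))) => t.card = n e))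
  rw [Fintype.card_congr e2, Fintype.card_pi]
  exact Finset.prod_congr rfl fun e _ => card_finset_card_eq (k e) (n e)

/-- The fiber of pairs summing to `k` is a finite type. -/
instance fiberFintype (k : E → ℕ) : Fintype {p : (E → ℕ) × (E → ℕ) // p.1 + p.2 = k} := by
  classical
  apply Fintype.ofInjective
    (f := fun p : {p : (E → ℕ) × (E → ℕ) // p.1 + p.2 = k} =>
      (fun e => (⟨p.1.1 e, by
        have := congrFun p.2 e
        simp only [Pi.add_apply] at this
        omega⟩ : Fin (k e + 1))))
  rintro ⟨⟨n, m⟩, hp⟩ ⟨⟨n', m'⟩, hq⟩ h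
  have h1 : n = n' := by
    funext e
    have := congrFun h e
    simpa using congrArg Fin.val this
  subst h1
  have h2 : m = m' := by
    funext e
    have hp' := congrFun hp e
    have hq' := congrFun hq e
    simp only [Pi.add_apply] at hp' hq'
    omega
  subst h2
  rfl

/-- The map sending a multigraph edge-set to the corresponding pair of currents. -/
def mPsi (S : Finset (mEdge k)) : {p : (E → ℕ) × (E → ℕ) // p.1 + p.2 = k} :=
  ⟨(mPhi k S, k - mPhi k S), by
    funext e
    simp only [Pi.add_apply, Pi.sub_apply]
    have := mPhi_le k S e
    omega⟩

lemma fibration_sum (g : (E → ℕ) → ENNReal) :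
    ∑ p : {p : (E → ℕ) × (E → ℕ) // p.1 + p.2 = k},
        (∏ e : E, ((k e).choose (p.1.1 e) : ENNReal)) * g p.1.1
      = ∑ S : Finset (mEdge k), g (mPhi k S) := by
  classical
  rw [← Finset.sum_fiberwise_of_maps_to
    (g := mPsi k) (fun S _ => Finset.mem_univ (mPsi k S)) (fun S => g (mPhi k S))]
  refine Finset.sum_congr rfl fun p _ => ?_
  have hfil : (Finset.univ.filter fun S : Finset (mEdge k) => mPsi k S = p)
      = Finset.univ.filter fun S => mPhi k S = p.1.1 := by
    ext S
    simp only [Finset.mem_filter, Finset.mem_univ, true_and]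
    constructor
    · intro h; rw [← h]; rfl
    · intro h
      apply Subtype.ext
      have hm : k - mPhi k S = p.1.2 := by
        funext e
        have h1 := congrFun p.2 e
        have h2 := congrFun h e
        simp only [Pi.add_apply, Pi.sub_apply] at *
        have := mPhi_le k S e
        omega
      show (mPhi k S, k - mPhi k S) = p.1
      rw [hm, h]
  rw [hfil,
    Finset.sum_congr rfl (fun S hS => by rw [(Finset.mem_filter.mp hS).2]),
    Finset.sum_const, card_fiber, nsmul_eq_mul, Nat.cast_prod]

end Count

section Weight

variable {E : Type*} [Fintype E]

lemma curWeight_mul_eq {J : E → ℝ} (hJ : ∀ e, 0 ≤ J e) (n m : E → ℕ) :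
    curWeight J n * curWeight J m
      = (∏ e : E, (((n e + m e).choose (n e) : ℕ) : ENNReal)) * curWeight J (n + m) := by
  rw [curWeight, curWeight, curWeight, ← Finset.prod_mul_distrib, ← Finset.prod_mul_distrib]
  refine Finset.prod_congr rfl fun e _ => ?_
  rw [← ENNReal.ofReal_mul (div_nonneg (pow_nonneg (hJ e) _) (by positivity)), Pi.add_apply]
  have hfac : (((n e + m e).choose (n e) : ℕ) : ℝ)
      * (Nat.factorial (n e)) * (Nat.factorial (m e)) = (Nat.factorial (n e + m e) : ℝ) := by
    have h := Nat.choose_mul_factorial_mul_factorial (Nat.le_add_right (n e) (m e))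
    have h2 : n e + m e - n e = m e := by omega
    rw [h2] at h
    exact_mod_cast congrArg (fun x : ℕ => (x : ℝ)) h
  have key : J e ^ n e / (Nat.factorial (n e)) * (J e ^ m e / (Nat.factorial (m e)))
      = (((n e + m e).choose (n e) : ℕ) : ℝ)
        * (J e ^ (n e + m e) / (Nat.factorial (n e + m e))) := by
    rw [pow_add]
    have h1 : (Nat.factorial (n e) : ℝ) ≠ 0 := by positivity
    have h2 : (Nat.factorial (m e) : ℝ) ≠ 0 := by positivity
    have h3 : (Nat.factorial (n e + m e) : ℝ) ≠ 0 := by positivity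
    field_simp
    linear_combination (-(J e ^ n e * J e ^ m e)) * hfac
  rw [key, ENNReal.ofReal_mul (by positivity), ENNReal.ofReal_natCast]

end Weight

section Core

variable {V E : Type*} [Fintype V] [Fintype E] [DecidableEq V] (ends : E → Sym2 V) (k : E → ℕ)

lemma symmDiff_right_cancel_iff {X A B : Finset V} : X ∆ B = A ∆ B ↔ X = A := by
  constructor
  · intro h
    have h2 := congrArg (· ∆ B) h
    simpa [symmDiff_symmDiff_cancel_right] using h2
  · rintro rfl; rfl

lemma core_S (hnd : ∀ e, ¬ (ends e).IsDiag) (A B : Finset V) (c : ENNReal) :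
    (∑ S : Finset (mEdge k),
      if curSources ends (mPhi k S) = A
          ∧ curSources ends k ∆ curSources ends (mPhi k S) = B then c else 0)
    = ∑ S : Finset (mEdge k),
      if curSources ends (mPhi k S) = A ∆ B
          ∧ curSources ends k ∆ curSources ends (mPhi k S) = ∅
          ∧ evenClusters ends k B then c else 0 := by
  classical
  simp_rw [← mbnd_eq]
  by_cases hk : curSources ends k = A ∆ B
  · by_cases hEB : evenClusters ends k B
    · obtain ⟨M, hM⟩ := exists_mbnd_aux ends k hnd B.card B le_rfl
        ((evenClusters_iff ends k B).mp hEB)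
      refine Fintype.sum_equiv
        ⟨fun S => S ∆ M, fun S => S ∆ M,
          fun S => symmDiff_symmDiff_cancel_right M S,
          fun S => symmDiff_symmDiff_cancel_right M S⟩ _ _ fun S => ?_
      simp only [Equiv.coe_fn_mk, mbnd_symmDiff, hM]
      refine if_congr ?_ rfl rfl
      constructor
      · rintro ⟨h1, h2⟩
        rw [h1, hk]
        exact ⟨rfl, by rw [symmDiff_self, Finset.bot_eq_empty], hEB⟩
      · rintro ⟨h1, h2, -⟩
        have hS : mbnd ends k S = A := symmDiff_right_cancel_iff.mp h1
        refine ⟨hS, ?_⟩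
        rw [hS, hk, symmDiff_comm A B, symmDiff_symmDiff_cancel_right]
    · rw [Finset.sum_eq_zero, Finset.sum_eq_zero]
      · intro S _
        rw [if_neg]
        rintro ⟨-, -, h3⟩
        exact hEB h3
      · intro S _
        rw [if_neg]
        rintro ⟨h1, h2⟩
        apply hEB
        have hM : mbnd ends k (Finset.univ ∆ S) = B := by
          rw [mbnd_symmDiff, mbnd_univ, h2]
        rw [← hM]
        exact mbnd_evenClusters ends k hnd _
  · rw [Finset.sum_eq_zero, Finset.sum_eq_zero]
    · intro S _
      rw [if_neg]
      rintro ⟨h1, h2, -⟩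
      apply hk
      have := congrArg (· ∆ mbnd ends k S) h2
      simp only [symmDiff_symmDiff_cancel_right] at this
      rw [this, h1]
      simp [symmDiff_comm]
    · intro S _
      rw [if_neg]
      rintro ⟨h1, h2⟩
      apply hk
      have := congrArg (· ∆ mbnd ends k S) h2
      simp only [symmDiff_symmDiff_cancel_right] at this
      rw [this, h1]
      exact symmDiff_comm _ _

end Core

section Main

variable {V E : Type*} [Fintype V] [Fintype E] [DecidableEq V]

set_option maxHeartbeats 1000000 in
lemma per_k (ends : E → Sym2 V) (hnd : ∀ e, ¬ (ends e).IsDiag)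
    (J : E → ℝ) (hJ : ∀ e, 0 ≤ J e) (A B : Finset V) (F : (E → ℕ) → ENNReal) (k : E → ℕ) :
    (∑ p : {p : (E → ℕ) × (E → ℕ) // p.1 + p.2 = k},
        if curSources ends p.1.1 = A ∧ curSources ends p.1.2 = B then
          curWeight J p.1.1 * curWeight J p.1.2 * F (p.1.1 + p.1.2) else 0)
      = ∑ p : {p : (E → ℕ) × (E → ℕ) // p.1 + p.2 = k},
        if curSources ends p.1.1 = A ∆ B ∧ curSources ends p.1.2 = ∅ ∧
            evenClusters ends (p.1.1 + p.1.2) B then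
          curWeight J p.1.1 * curWeight J p.1.2 * F (p.1.1 + p.1.2) else 0 := by
  classical
  have hrw : ∀ (p : {p : (E → ℕ) × (E → ℕ) // p.1 + p.2 = k}),
      curWeight J p.1.1 * curWeight J p.1.2 * F (p.1.1 + p.1.2)
        = (∏ e : E, ((k e).choose (p.1.1 e) : ENNReal))
            * (curWeight J k * F k) := by
    rintro ⟨⟨n, m⟩, hp⟩
    simp only at *
    rw [curWeight_mul_eq hJ n m, hp]
    rw [show (∏ e : E, (((n e + m e).choose (n e) : ℕ) : ENNReal))
        = ∏ e : E, (((k e).choose (n e) : ℕ) : ENNReal) from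
      Finset.prod_congr rfl fun e _ => by rw [show n e + m e = k e from congrFun hp e]]
    ring
  have hsrc : ∀ (p : {p : (E → ℕ) × (E → ℕ) // p.1 + p.2 = k}),
      curSources ends p.1.2 = curSources ends k ∆ curSources ends p.1.1 := by
    rintro ⟨⟨n, m⟩, hp⟩
    simp only at *
    have hle : ∀ e, n e ≤ k e := fun e => by
      have := congrFun hp e; simp only [Pi.add_apply] at this; omega
    have hm : m = k - n := by
      funext e
      have := congrFun hp e; simp only [Pi.add_apply, Pi.sub_apply] at *; omega
    rw [hm]
    exact curSources_sub ends hle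
  calc (∑ p : {p : (E → ℕ) × (E → ℕ) // p.1 + p.2 = k},
        if curSources ends p.1.1 = A ∧ curSources ends p.1.2 = B then
          curWeight J p.1.1 * curWeight J p.1.2 * F (p.1.1 + p.1.2) else 0)
      = ∑ p : {p : (E → ℕ) × (E → ℕ) // p.1 + p.2 = k},
          (∏ e : E, ((k e).choose (p.1.1 e) : ENNReal)) *
            (if curSources ends p.1.1 = A
                ∧ curSources ends k ∆ curSources ends p.1.1 = B then
              curWeight J k * F k else 0) := by
        refine Finset.sum_congr rfl fun p _ => ?_
        rw [hrw p]
        rw [if_congr (iff_of_eq (congrArg _ (congrArg (· = B) (hsrc p)))) rfl rfl]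
        by_cases h : curSources ends p.1.1 = A
            ∧ curSources ends k ∆ curSources ends p.1.1 = B <;>
          simp [h]
    _ = ∑ S : Finset (mEdge k),
          (if curSources ends (mPhi k S) = A
              ∧ curSources ends k ∆ curSources ends (mPhi k S) = B then
            curWeight J k * F k else 0) :=
      fibration_sum k (fun n => if curSources ends n = A
          ∧ curSources ends k ∆ curSources ends n = B then
        curWeight J k * F k else 0)
    _ = ∑ S : Finset (mEdge k),
          (if curSources ends (mPhi k S) = A ∆ B
              ∧ curSources ends k ∆ curSources ends (mPhi k S) = ∅
              ∧ evenClusters ends k B then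
            curWeight J k * F k else 0) := core_S ends k hnd A B _
    _ = ∑ p : {p : (E → ℕ) × (E → ℕ) // p.1 + p.2 = k},
          (∏ e : E, ((k e).choose (p.1.1 e) : ENNReal)) *
            (if curSources ends p.1.1 = A ∆ B
                ∧ curSources ends k ∆ curSources ends p.1.1 = ∅
                ∧ evenClusters ends k B then
              curWeight J k * F k else 0) :=
      (fibration_sum k (fun n => if curSources ends n = A ∆ B
          ∧ curSources ends k ∆ curSources ends n = ∅
          ∧ evenClusters ends k B then
        curWeight J k * F k else 0)).symm
    _ = _ := by
        refine Finset.sum_congr rfl fun p _ => ?_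
        rw [hrw p]
        have hc : (curSources ends p.1.1 = A ∆ B
              ∧ curSources ends k ∆ curSources ends p.1.1 = ∅
              ∧ evenClusters ends k B)
            ↔ (curSources ends p.1.1 = A ∆ B ∧ curSources ends p.1.2 = ∅ ∧
              evenClusters ends (p.1.1 + p.1.2) B) := by
          rw [hsrc p, p.2]
        rw [if_congr hc rfl rfl]
        by_cases h : curSources ends p.1.1 = A ∆ B ∧ curSources ends p.1.2 = ∅ ∧
            evenClusters ends (p.1.1 + p.1.2) B <;>
          simp [h]

end Main

/-- The Switching Lemma for random currents:
`Σ_{∂n=A} Σ_{∂m=B} w(n)w(m)F(n+m)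
  = Σ_{∂n=AΔB} Σ_{∂m=∅} w(n)w(m)F(n+m) 1[n+m ∈ E_B]`. -/
theorem switching_lemma {V E : Type*} [Fintype V] [Fintype E] [DecidableEq V]
    (ends : E → Sym2 V) (hnd : ∀ e, ¬ (ends e).IsDiag)
    (J : E → ℝ) (hJ : ∀ e, 0 ≤ J e)
    (A B : Finset V) (hA : Even A.card) (hB : Even B.card)
    (F : (E → ℕ) → ENNReal) :
    (∑' n : E → ℕ, ∑' m : E → ℕ,
        (if curSources ends n = A ∧ curSources ends m = B then
          curWeight J n * curWeight J m * F (n + m) else 0))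
      = ∑' n : E → ℕ, ∑' m : E → ℕ,
        (if curSources ends n = A ∆ B ∧ curSources ends m = ∅ ∧
            evenClusters ends (n + m) B then
          curWeight J n * curWeight J m * F (n + m) else 0) := by
    classical
  rw [← ENNReal.tsum_prod, ← ENNReal.tsum_prod,
    ← (Equiv.sigmaFiberEquiv (fun p : (E → ℕ) × (E → ℕ) => p.1 + p.2)).tsum_eq,
    ← (Equiv.sigmaFiberEquiv (fun p : (E → ℕ) × (E → ℕ) => p.1 + p.2)).tsum_eq,
    ENNReal.tsum_sigma', ENNReal.tsum_sigma']
  refine tsum_congr fun k => ?_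
  rw [tsum_fintype, tsum_fintype]
  exact per_k ends hnd J hJ A B F k
end
end

section
/- Insertion tolerance for random currents: Let G be a finite weighted graph, e ∈ E_G with weight J_e > 0, and A ⊂ V_G. Then uniformly over the values n_f for f ≠ e, the random current measure P^A_G satisfies P^A_G(n_e > 0, n_f = n_f' ∀f ≠ e) ≥ c(J_e) · P^A_G(n_f = n_f' ∀f ≠ e), where c(J_e) = (cosh(J_e) - 1)/cosh(J_e). -/
open Finset Classical

noncomputable section

/-- The incidence sum at a vertex, with the current updated at one edge, splits off
the updated edge. -/
private lemma sum_update_aux {V E : Type*} [Fintype V] [Fintype E] [DecidableEq V]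
    [DecidableEq E] (ends : E → Sym2 V) (n' : E → ℕ) (e : E) (v : V) (j : ℕ) :
    (∑ f : E, if v ∈ ends f then Function.update n' e j f else 0)
      = (if v ∈ ends e then j else 0)
        + ∑ f ∈ ({e}ᶜ : Finset E), (if v ∈ ends f then n' f else 0) := by
  rw [Fintype.sum_eq_add_sum_compl e]
  congr 1
  · simp
  · refine Finset.sum_congr rfl fun f hf => ?_
    have hfe : f ≠ e := by simpa using hf
    rw [Function.update_of_ne hfe]

/-- The sources of an updated current depend only on the parity of the new value. -/
private lemma sources_parity_aux {V E : Type*} [Fintype V] [Fintype E] [DecidableEq V]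
    [DecidableEq E] (ends : E → Sym2 V) (n' : E → ℕ) (e : E) (k m : ℕ)
    (h : k % 2 = m % 2) :
    curSources ends (Function.update n' e k) = curSources ends (Function.update n' e m) := by
  unfold curSources
  ext v
  simp only [Finset.mem_filter, Finset.mem_univ, true_and]
  rw [sum_update_aux ends n' e v k, sum_update_aux ends n' e v m, Nat.odd_add, Nat.odd_add]
  have : Odd (if v ∈ ends e then k else 0) ↔ Odd (if v ∈ ends e then m else 0) := by
    split_ifs with hv
    · rw [Nat.odd_iff, Nat.odd_iff, h]
    · exact Iff.rfl
  rw [this]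

/-- Sum of `x^k/k!` over even `k`, in `ℝ≥0∞`, equals `cosh x`. -/
private lemma tsum_even_ofReal_aux (x : ℝ) (hx : 0 ≤ x) :
    (∑' k : ℕ, if Even k then ENNReal.ofReal (x ^ k / (Nat.factorial k)) else 0)
      = ENNReal.ofReal (Real.cosh x) := by
  have hinj : Function.Injective (fun n : ℕ => 2 * n) := fun a b h => by
    simp only [] at h; omega
  have hsupp : Function.support
      (fun k : ℕ => if Even k then ENNReal.ofReal (x ^ k / (Nat.factorial k)) else 0)
      ⊆ Set.range (fun n : ℕ => 2 * n) := by
    intro k hk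
    have hk' : Even k := by
      by_contra h
      simp only [Function.mem_support, if_neg h, ne_eq, not_true_eq_false] at hk
    obtain ⟨m, hm⟩ := hk'
    exact ⟨m, show 2 * m = k by omega⟩
  rw [← Function.Injective.tsum_eq hinj hsupp]
  have h1 : ∀ n : ℕ,
      (if Even (2 * n) then ENNReal.ofReal (x ^ (2 * n) / (Nat.factorial (2 * n))) else 0)
        = ENNReal.ofReal (x ^ (2 * n) / (Nat.factorial (2 * n))) :=
    fun n => if_pos (even_two_mul n)
  rw [tsum_congr h1, ← ENNReal.ofReal_tsum_of_nonneg
    (fun n => div_nonneg (pow_nonneg hx _) (Nat.cast_nonneg _)) (Real.hasSum_cosh x).summable, (Real.hasSum_cosh x).tsum_eq]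

/-- Insertion tolerance for random currents: uniformly over the values `n'` of the
current on the edges `f ≠ e`, the conditional weight of `{n_e > 0}` under the random
current measure with sources `A` is at least `c(J_e) = (cosh J_e - 1)/cosh J_e`.
Equivalently, in unnormalized form:
`Σ_{k>0, ∂n=A} w(n) ≥ c(J_e) Σ_{k≥0, ∂n=A} w(n)` where `n = n'` off `e` and `n_e = k`. -/
theorem insertion_tolerance {V E : Type*} [Fintype V] [Fintype E]
    [DecidableEq V] [DecidableEq E]
    (ends : E → Sym2 V) (J : E → ℝ) (hJ : ∀ f, 0 ≤ J f)
    (e : E) (hJe : 0 < J e) (A : Finset V) (n' : E → ℕ) :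
    ENNReal.ofReal ((Real.cosh (J e) - 1) / Real.cosh (J e)) *
        (∑' k : ℕ, if curSources ends (Function.update n' e k) = A then
          curWeight J (Function.update n' e k) else 0)
      ≤ ∑' k : ℕ, if 0 < k ∧ curSources ends (Function.update n' e k) = A then
          curWeight J (Function.update n' e k) else 0 := by
  classical
  set S0 := curSources ends (Function.update n' e 0) with hS0
  set S1 := curSources ends (Function.update n' e 1) with hS1
  have hcosh1 : 1 ≤ Real.cosh (J e) := Real.one_le_cosh (J e)
  have hcoshpos : 0 < Real.cosh (J e) := lt_of_lt_of_le one_pos hcosh1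
  have hcnn : 0 ≤ (Real.cosh (J e) - 1) / Real.cosh (J e) := by
    apply div_nonneg <;> linarith
  -- sources depend only on parity
  have hsrc : ∀ k : ℕ, curSources ends (Function.update n' e k)
      = if Even k then S0 else S1 := by
    intro k
    by_cases hk : Even k
    · rw [if_pos hk, hS0]
      exact sources_parity_aux ends n' e k 0 (by simp [Nat.even_iff.mp hk])
    · rw [if_neg hk, hS1]
      have hk' : k % 2 = 1 := Nat.odd_iff.mp (Nat.not_even_iff_odd.mp hk)
      exact sources_parity_aux ends n' e k 1 (by omega)
  -- S0 ≠ S1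
  have hne : S0 ≠ S1 := by
    obtain ⟨x, hx⟩ : ∃ x, x ∈ ends e :=
      Sym2.ind (fun a b => ⟨a, Sym2.mem_mk_left a b⟩) (ends e)
    intro hEq
    have h0 : x ∈ S0 ↔ Odd (0 + ∑ f ∈ ({e}ᶜ : Finset E), (if x ∈ ends f then n' f else 0)) := by
      rw [hS0]
      simp only [curSources, Finset.mem_filter, Finset.mem_univ, true_and]
      rw [sum_update_aux ends n' e x 0, if_pos hx]
    have h1 : x ∈ S1 ↔ Odd (1 + ∑ f ∈ ({e}ᶜ : Finset E), (if x ∈ ends f then n' f else 0)) := by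
      rw [hS1]
      simp only [curSources, Finset.mem_filter, Finset.mem_univ, true_and]
      rw [sum_update_aux ends n' e x 1, if_pos hx]
    set R := ∑ f ∈ ({e}ᶜ : Finset E), (if x ∈ ends f then n' f else 0) with hR
    have : Odd (0 + R) ↔ Odd (1 + R) := by
      rw [← h0, ← h1, hEq]
    rw [Nat.odd_iff, Nat.odd_iff] at this
    omega
  -- weight factorization
  set C := ∏ f ∈ ({e}ᶜ : Finset E),
      ENNReal.ofReal (J f ^ n' f / (Nat.factorial (n' f))) with hC
  set a : ℕ → ENNReal := fun k => ENNReal.ofReal (J e ^ k / (Nat.factorial k)) with ha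
  have hw : ∀ k : ℕ, curWeight J (Function.update n' e k) = a k * C := by
    intro k
    rw [curWeight, Fintype.prod_eq_mul_prod_compl e]
    congr 1
    · simp [ha]
    · refine Finset.prod_congr rfl fun f hf => ?_
      have hfe : f ≠ e := by simpa using hf
      rw [Function.update_of_ne hfe]
  by_cases hA0 : S0 = A
  · -- even case
    have hA1 : S1 ≠ A := fun h => hne (hA0.trans h.symm)
    have hL : (∑' k : ℕ, if curSources ends (Function.update n' e k) = A then
        curWeight J (Function.update n' e k) else 0)
        = (∑' k : ℕ, if Even k then a k else 0) * C := by
      rw [← ENNReal.tsum_mul_right]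
      refine tsum_congr fun k => ?_
      rw [hw k, hsrc k]
      by_cases hEv : Even k
      · simp only [if_pos hEv, if_pos hA0]
      · simp only [if_neg hEv, if_neg hA1, zero_mul]
    have hR : (∑' k : ℕ, if 0 < k ∧ curSources ends (Function.update n' e k) = A then
        curWeight J (Function.update n' e k) else 0)
        = (∑' k : ℕ, if 0 < k ∧ Even k then a k else 0) * C := by
      rw [← ENNReal.tsum_mul_right]
      refine tsum_congr fun k => ?_
      rw [hw k, hsrc k]
      by_cases hEv : Even k
      · have h2 : (0 < k ∧ S0 = A) ↔ (0 < k ∧ Even k) :=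
          ⟨fun h => ⟨h.1, hEv⟩, fun h => ⟨h.1, hA0⟩⟩
        rw [if_pos hEv, if_congr h2 rfl rfl, ite_mul, zero_mul]
      · rw [if_neg hEv, if_neg (fun h : 0 < k ∧ S1 = A => hA1 h.2),
          if_neg (fun h : 0 < k ∧ Even k => hEv h.2), zero_mul]
    rw [hL, hR, ← mul_assoc]
    refine mul_le_mul_left ?_ C
    -- key series computation
    have hE : (∑' k : ℕ, if Even k then a k else 0) = ENNReal.ofReal (Real.cosh (J e)) :=
      tsum_even_ofReal_aux (J e) (hJ e)
    have hsplit : (∑' k : ℕ, if Even k then a k else 0)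
        = 1 + ∑' k : ℕ, if 0 < k ∧ Even k then a k else 0 := by
      have hpt : ∀ k : ℕ, (if Even k then a k else 0)
          = (if k = 0 then 1 else 0) + (if 0 < k ∧ Even k then a k else 0) := by
        intro k
        rcases Nat.eq_zero_or_pos k with hk | hk
        · subst hk
          simp [ha]
        · rw [if_neg (Nat.pos_iff_ne_zero.mp hk), zero_add]
          by_cases hEv : Even k
          · rw [if_pos hEv, if_pos ⟨hk, hEv⟩]
          · rw [if_neg hEv, if_neg (fun h => hEv h.2)]
      rw [tsum_congr hpt, ENNReal.tsum_add, tsum_ite_eq (0 : ℕ) (fun _ => (1 : ENNReal))]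
    have hkey : ENNReal.ofReal ((Real.cosh (J e) - 1) / Real.cosh (J e))
        * ENNReal.ofReal (Real.cosh (J e)) = ENNReal.ofReal (Real.cosh (J e) - 1) := by
      rw [← ENNReal.ofReal_mul hcnn, div_mul_cancel₀ _ (ne_of_gt hcoshpos)]
    rw [hE, hkey]
    have hle : ENNReal.ofReal (Real.cosh (J e)) ≤
        1 + ∑' k : ℕ, if 0 < k ∧ Even k then a k else 0 := le_of_eq (hE ▸ hsplit)
    calc ENNReal.ofReal (Real.cosh (J e) - 1)
        = ENNReal.ofReal (Real.cosh (J e)) - ENNReal.ofReal 1 := by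
          rw [ENNReal.ofReal_sub _ zero_le_one]
      _ ≤ _ := by
          rw [ENNReal.ofReal_one]
          exact tsub_le_iff_left.mpr hle
  · by_cases hA1 : S1 = A
    · -- odd case: the two sums coincide
      have hEq : (∑' k : ℕ, if 0 < k ∧ curSources ends (Function.update n' e k) = A then
          curWeight J (Function.update n' e k) else 0)
          = ∑' k : ℕ, if curSources ends (Function.update n' e k) = A then
          curWeight J (Function.update n' e k) else 0 := by
        refine tsum_congr fun k => ?_
        rw [hsrc k]
        by_cases hEv : Even k
        · rw [if_pos hEv, if_neg hA0, if_neg (fun h => hA0 h.2)]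
        · rw [if_neg hEv, if_pos hA1, if_pos ⟨Nat.pos_of_ne_zero (fun h => hEv (by subst h; exact Even.zero)),
            hA1⟩]
      rw [hEq]
      calc ENNReal.ofReal ((Real.cosh (J e) - 1) / Real.cosh (J e)) * _
          ≤ 1 * (∑' k : ℕ, if curSources ends (Function.update n' e k) = A then
            curWeight J (Function.update n' e k) else 0) := by
            refine mul_le_mul_left ?_ _
            rw [ENNReal.ofReal_le_one]
            rw [div_le_one hcoshpos]
            linarith
        _ = _ := one_mul _
    · -- neither parity matches: everything is zero
      have hz : (∑' k : ℕ, if curSources ends (Function.update n' e k) = A then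
          curWeight J (Function.update n' e k) else 0) = 0 := by
        refine ENNReal.tsum_eq_zero.mpr fun k => ?_
        rw [hsrc k]
        by_cases hEv : Even k
        · rw [if_pos hEv, if_neg hA0]
        · rw [if_neg hEv, if_neg hA1]
      rw [hz, mul_zero]
      exact zero_le
end
end

section
/- Random current representation of correlations: for a finite graph G with couplings J and field h, appending a ghost vertex g coupled to each vertex with strength h, one has for any A ⊂ V_G of even cardinality: ⟨σ_A⟩_G = Z_{G_g}(A)/Z_{G_g}(∅), and for A of odd cardinality ⟨σ_A⟩_G = Z_{G_g}(A ∪ {g})/Z_{G_g}(∅), where Z_{G_g}(S) = Σ_{∂n = S} Π_{e} (J̃_e)^{n_e}/n_e! is the partition function of currents on the augmented graph G_g with sources S. -/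
open Finset Classical

noncomputable section

/-- The couplings of the augmented graph `G_g`: the ghost `⊥` is coupled to every
vertex with strength `h`, and the other couplings are given by `J`. -/
def Jaug {V : Type*} (J : V → V → ℝ) (h : ℝ) (a b : WithBot V) : ℝ :=
  WithBot.recBotCoe (WithBot.recBotCoe (0 : ℝ) (fun _ => h) b)
    (fun i => WithBot.recBotCoe h (fun j => J i j) b) a

/-- The space of currents on the augmented graph: symmetric, loopless
`ℕ`-valued functions on pairs of vertices of `G_g`. -/
def CurSpace (W : Type*) : Type _ :=
  {n : W → W → ℕ // (∀ a b, n a b = n b a) ∧ ∀ a, n a a = 0}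

instance instFintypeWithBotAug {V : Type*} [Fintype V] : Fintype (WithBot V) :=
  inferInstanceAs (Fintype (Option V))

/-- The weight `w(n) = ∏_{e} (J̃_e)^{n_e}/n_e!` of a current on the augmented
graph (product over unordered pairs, via `a < b`). -/
def curW {V : Type*} [Fintype V] [LinearOrder V] (J : V → V → ℝ) (h : ℝ)
    (n : WithBot V → WithBot V → ℕ) : ℝ :=
  ∏ a : WithBot V, ∏ b : WithBot V,
    if a < b then Jaug J h a b ^ n a b / (Nat.factorial (n a b)) else 1

/-- The sources of a current on the augmented graph. -/
def curSrc {V : Type*} [Fintype V] [LinearOrder V]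
    (n : WithBot V → WithBot V → ℕ) : Finset (WithBot V) :=
  Finset.univ.filter (fun v => Odd (∑ u : WithBot V, n v u))

/-- The partition function `Z_{G_g}(S)` of random currents on the augmented graph
with sources `S`. -/
def Zcur {V : Type*} [Fintype V] [LinearOrder V] (J : V → V → ℝ) (h : ℝ)
    (S : Finset (WithBot V)) : ℝ :=
  ∑' n : CurSpace (WithBot V), if curSrc n.1 = S then curW J h n.1 else 0

/-! ### Auxiliary lemmas -/

lemma my_mul_norm {α β : Type*} {F : α → ℝ} {G : β → ℝ}
    (hF : Summable fun a => ‖F a‖) (hG : Summable fun b => ‖G b‖) :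
    Summable (fun p : α × β => ‖F p.1 * G p.2‖) := Summable.mul_norm hF hG

lemma my_tsum_mul_tsum {α β : Type*} {F : α → ℝ} {G : β → ℝ}
    (hF : Summable fun a => ‖F a‖) (hG : Summable fun b => ‖G b‖) :
    ∑' p : α × β, F p.1 * G p.2 = (∑' a, F a) * (∑' b, G b) :=
  (Summable.tsum_mul_tsum hF.of_norm hG.of_norm (my_mul_norm hF hG).of_norm).symm

lemma pi_tsum_fin : ∀ (n : ℕ) (f : Fin n → ℕ → ℝ), (∀ i, Summable fun k => ‖f i k‖) →
    Summable (fun g : Fin n → ℕ => ‖∏ i, f i (g i)‖) ∧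
      (∑' g : Fin n → ℕ, ∏ i, f i (g i)) = ∏ i, ∑' k, f i k := by
  intro n
  induction n with
  | zero =>
    intro f hf
    constructor
    · exact Summable.of_finite
    · rw [tsum_eq_single (fun i => i.elim0) (fun b hb => absurd (Subsingleton.elim b _) hb)]
      simp
  | succ n ih =>
    intro f hf
    obtain ⟨ihS, ihT⟩ := ih (fun i => f i.succ) (fun i => hf i.succ)
    let e : (Fin (n+1) → ℕ) ≃ ℕ × (Fin n → ℕ) := (Fin.consEquiv fun _ => ℕ).symm
    have hdec : ∀ g : Fin (n+1) → ℕ,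
        ∏ i, f i (g i) = f 0 (g 0) * ∏ i : Fin n, f i.succ (g i.succ) :=
      fun g => Fin.prod_univ_succ _
    have hmulnorm := my_mul_norm (hf 0) ihS
    have hcomp : ∀ g : Fin (n+1) → ℕ,
        f 0 (e g).1 * ∏ i, f i.succ ((e g).2 i) = ∏ i, f i (g i) := by
      intro g; rw [hdec g]; rfl
    constructor
    · have h2 : Summable ((fun p : ℕ × (Fin n → ℕ) => ‖f 0 p.1 * ∏ i, f i.succ (p.2 i)‖) ∘ e) :=
        (Equiv.summable_iff e).2 hmulnorm
      exact h2.congr (fun g => by simp only [Function.comp]; rw [hcomp g])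
    · have hswap : ∑' g : Fin (n+1) → ℕ, ∏ i, f i (g i)
          = ∑' p : ℕ × (Fin n → ℕ), f 0 p.1 * ∏ i, f i.succ (p.2 i) := by
        rw [← Equiv.tsum_eq e (fun p : ℕ × (Fin n → ℕ) => f 0 p.1 * ∏ i, f i.succ (p.2 i))]
        exact tsum_congr (fun g => (hcomp g).symm)
      have hmul := my_tsum_mul_tsum (hf 0) ihS
      rw [hswap, hmul, ihT, Fin.prod_univ_succ]

lemma pi_tsum {ι : Type*} [Fintype ι] (f : ι → ℕ → ℝ)
    (hf : ∀ i, Summable fun k => ‖f i k‖) :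
    Summable (fun g : ι → ℕ => ‖∏ i, f i (g i)‖) ∧
      (∑' g : ι → ℕ, ∏ i, f i (g i)) = ∏ i, ∑' k, f i k := by
  have e := Fintype.equivFin ι
  obtain ⟨hS, hT⟩ := pi_tsum_fin _ (fun j => f (e.symm j)) (fun j => hf _)
  let epi : (ι → ℕ) ≃ (Fin (Fintype.card ι) → ℕ) := Equiv.arrowCongr e (Equiv.refl ℕ)
  have key : ∀ g : ι → ℕ, ∏ i : ι, f i (g i) = ∏ j, f (e.symm j) ((epi g) j) := by
    intro g
    refine Fintype.prod_equiv e _ _ (fun i => ?_)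
    simp [epi, Equiv.arrowCongr]
  constructor
  · have h2 : Summable ((fun g' : Fin (Fintype.card ι) → ℕ => ‖∏ j, f (e.symm j) (g' j)‖) ∘ epi) :=
      (Equiv.summable_iff epi).2 hS
    exact h2.congr (fun g => by simp only [Function.comp]; rw [← key g])
  · have h3 : ∑' g : ι → ℕ, ∏ i, f i (g i)
        = ∑' g' : Fin (Fintype.card ι) → ℕ, ∏ j, f (e.symm j) (g' j) := by
      rw [← Equiv.tsum_eq epi (fun g' : Fin (Fintype.card ι) → ℕ => ∏ j, f (e.symm j) (g' j))]
      exact tsum_congr key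
    rw [h3, hT]
    exact Fintype.prod_equiv e.symm _ _ (fun j => rfl)

/-- Currents are equivalent to functions on ordered pairs. -/
def curEquiv (W : Type*) [LinearOrder W] :
    CurSpace W ≃ ({p : W × W // p.1 < p.2} → ℕ) where
  toFun n e := n.1 e.1.1 e.1.2
  invFun m := ⟨fun a b =>
      if hab : a < b then m ⟨(a, b), hab⟩
      else if hba : b < a then m ⟨(b, a), hba⟩ else 0, by
    constructor
    · intro a b
      beta_reduce
      rcases lt_trichotomy a b with hlt | heq | hgt
      · rw [dif_pos hlt, dif_neg (not_lt_of_gt hlt), dif_pos hlt]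
      · subst heq; rfl
      · rw [dif_neg (not_lt_of_gt hgt), dif_pos hgt, dif_pos hgt]
    · intro a; beta_reduce; rw [dif_neg (lt_irrefl a), dif_neg (lt_irrefl a)]⟩
  left_inv n := by
    apply Subtype.ext
    funext a b
    show (if hab : a < b then _ else if hba : b < a then _ else 0) = n.1 a b
    rcases lt_trichotomy a b with hlt | heq | hgt
    · exact dif_pos hlt
    · subst heq
      rw [dif_neg (lt_irrefl a), dif_neg (lt_irrefl a)]
      exact (n.2.2 a).symm
    · rw [dif_neg (not_lt_of_gt hgt), dif_pos hgt]
      exact n.2.1 b a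
  right_inv m := by
    funext e
    obtain ⟨⟨a, b⟩, hab⟩ := e
    exact dif_pos hab

lemma prod_pairs {W : Type*} [Fintype W] [LinearOrder W] {M : Type*} [CommMonoid M]
    (F : W → W → M) :
    ∏ a, ∏ b, (if a < b then F a b else 1)
      = ∏ e : {p : W × W // p.1 < p.2}, F e.1.1 e.1.2 := by
  rw [← Fintype.prod_prod_type (fun p : W × W => if p.1 < p.2 then F p.1 p.2 else 1)]
  rw [← Finset.prod_filter (fun p : W × W => p.1 < p.2) (fun p => F p.1 p.2)]
  exact Finset.prod_subtype _ (by simp) _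

lemma spin_not (b : Bool) : spin (!b) = -spin b := by cases b <;> simp [spin]

lemma sum_spin_pow (e : ℕ) : (∑ b : Bool, spin b ^ e) = if Even e then 2 else 0 := by
  rw [Fintype.sum_bool]
  rcases Nat.even_or_odd e with he | he
  · rw [if_pos he]
    simp [spin, he.neg_one_pow]
    norm_num
  · rw [if_neg (Nat.not_even_iff_odd.2 he)]
    simp [spin, he.neg_one_pow]

lemma summable_norm_pow_div (x : ℝ) : Summable fun k : ℕ => ‖x ^ k / (Nat.factorial k)‖ := by
  refine (Real.summable_pow_div_factorial |x|).congr fun k => ?_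
  rw [Real.norm_eq_abs, abs_div, abs_pow, Nat.abs_cast]

lemma real_exp_tsum (x : ℝ) : Real.exp x = ∑' k : ℕ, x ^ k / (Nat.factorial k) := by
  rw [Real.exp_eq_exp_ℝ]
  exact congrFun (NormedSpace.exp_eq_tsum_div (𝔸 := ℝ)) x

lemma sum_withBot {V : Type*} [Fintype V] {M : Type*} [AddCommMonoid M]
    (f : WithBot V → M) :
    ∑ a : WithBot V, f a = f ⊥ + ∑ i : V, f (i : WithBot V) :=
  Fintype.sum_option f

lemma sum_pi_bool {W : Type*} [Fintype W] [DecidableEq W] (G : W → Bool → ℝ) :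
    ∑ τ : W → Bool, ∏ a, G a (τ a) = ∏ a, ∑ b, G a b := by
  rw [Finset.prod_univ_sum, Fintype.piFinset_univ]

lemma weight_split {W : Type*} [Fintype W] [LinearOrder W] (K : W → W → ℝ)
    (n : W → W → ℕ) (hsym : ∀ a b, n a b = n b a) (hdiag : ∀ a, n a a = 0)
    (s : W → ℝ) :
    ∏ a, ∏ b, (if a < b then (K a b * s a * s b) ^ n a b / (Nat.factorial (n a b)) else 1)
      = (∏ a, ∏ b, if a < b then K a b ^ n a b / (Nat.factorial (n a b)) else 1)
        * ∏ a, s a ^ (∑ b, n a b) := by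
  have step1 : ∏ a, ∏ b, (if a < b then (K a b * s a * s b) ^ n a b / (Nat.factorial (n a b)) else 1)
      = ∏ a, ∏ b, ((if a < b then K a b ^ n a b / (Nat.factorial (n a b)) else 1)
          * ((if a < b then s a ^ n a b else 1) * (if a < b then s b ^ n a b else 1))) := by
    refine Finset.prod_congr rfl fun a _ => Finset.prod_congr rfl fun b _ => ?_
    by_cases hab : a < b
    · simp only [if_pos hab]
      rw [mul_pow, mul_pow]
      ring
    · simp [hab]
  rw [step1]
  simp only [Finset.prod_mul_distrib]
  congr 1
  have hP2 : (∏ a, ∏ b, if a < b then s b ^ n a b else 1)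
      = ∏ a, ∏ b, if b < a then s a ^ n a b else 1 := by
    rw [Finset.prod_comm]
    exact Finset.prod_congr rfl fun a _ => Finset.prod_congr rfl fun b _ => by
      rw [hsym]
  rw [hP2, ← Finset.prod_mul_distrib]
  refine Finset.prod_congr rfl fun a _ => ?_
  rw [← Finset.prod_mul_distrib, ← Finset.prod_pow_eq_pow_sum]
  refine Finset.prod_congr rfl fun b _ => ?_
  rcases lt_trichotomy a b with hlt | heq | hgt
  · rw [if_pos hlt, if_neg (not_lt_of_gt hlt), mul_one]
  · subst heq
    rw [if_neg (lt_irrefl a), hdiag, pow_zero]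
    norm_num
  · rw [if_neg (not_lt_of_gt hgt), if_pos hgt, one_mul]

lemma curInnerSum {V : Type*} [Fintype V] [LinearOrder V] (J : V → V → ℝ) (h : ℝ)
    (S : Finset (WithBot V)) (n : CurSpace (WithBot V)) :
    (∑ τ : WithBot V → Bool, (∏ a ∈ S, spin (τ a)) *
      ∏ a, ∏ b, (if a < b then
        (Jaug J h a b * spin (τ a) * spin (τ b)) ^ n.1 a b / (Nat.factorial (n.1 a b)) else 1))
    = if curSrc n.1 = S then 2 ^ Fintype.card (WithBot V) * curW J h n.1 else 0 := by
  have hmem : ∀ τ : WithBot V → Bool,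
      ∏ a ∈ S, spin (τ a) = ∏ a, spin (τ a) ^ (if a ∈ S then 1 else 0) := by
    intro τ
    rw [show (∏ a, spin (τ a) ^ (if a ∈ S then 1 else 0))
        = ∏ a, (if a ∈ S then spin (τ a) else 1) from
      Finset.prod_congr rfl fun a _ => by by_cases ha : a ∈ S <;> simp [ha]]
    rw [Finset.prod_ite_mem univ S (fun a => spin (τ a)), Finset.univ_inter]
  have step : ∀ τ : WithBot V → Bool,
      (∏ a ∈ S, spin (τ a)) *
        ∏ a, ∏ b, (if a < b then
          (Jaug J h a b * spin (τ a) * spin (τ b)) ^ n.1 a b / (Nat.factorial (n.1 a b)) else 1)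
      = curW J h n.1 * ∏ a, spin (τ a) ^ ((if a ∈ S then 1 else 0) + ∑ b, n.1 a b) := by
    intro τ
    rw [weight_split (Jaug J h) n.1 n.2.1 n.2.2 (fun a => spin (τ a)), hmem τ]
    simp only [pow_add, Finset.prod_mul_distrib]
    show _ = (∏ a : WithBot V, ∏ b : WithBot V, if a < b then
        Jaug J h a b ^ n.1 a b / (Nat.factorial (n.1 a b)) else 1) * _
    ring
  calc (∑ τ : WithBot V → Bool, (∏ a ∈ S, spin (τ a)) *
      ∏ a, ∏ b, (if a < b then
        (Jaug J h a b * spin (τ a) * spin (τ b)) ^ n.1 a b / (Nat.factorial (n.1 a b)) else 1))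
      = ∑ τ : WithBot V → Bool,
          curW J h n.1 * ∏ a, spin (τ a) ^ ((if a ∈ S then 1 else 0) + ∑ b, n.1 a b) :=
        Finset.sum_congr rfl fun τ _ => step τ
    _ = curW J h n.1 * ∑ τ : WithBot V → Bool,
          ∏ a, spin (τ a) ^ ((if a ∈ S then 1 else 0) + ∑ b, n.1 a b) := by
        rw [Finset.mul_sum]
    _ = curW J h n.1 * ∏ a, ∑ b : Bool, spin b ^ ((if a ∈ S then 1 else 0) + ∑ b', n.1 a b') := by
        congr 1
        exact sum_pi_bool (fun a b => spin b ^ ((if a ∈ S then 1 else 0) + ∑ b', n.1 a b'))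
    _ = curW J h n.1 * ∏ a, (if Even ((if a ∈ S then 1 else 0) + ∑ b', n.1 a b') then (2:ℝ) else 0) := by
        congr 1
        exact Finset.prod_congr rfl fun a _ => sum_spin_pow _
    _ = if curSrc n.1 = S then 2 ^ Fintype.card (WithBot V) * curW J h n.1 else 0 := by
        have hcond : (∀ a : WithBot V, Even ((if a ∈ S then 1 else 0) + ∑ b', n.1 a b'))
            ↔ curSrc n.1 = S := by
          rw [Finset.ext_iff]
          simp only [curSrc, Finset.mem_filter, Finset.mem_univ, true_and]
          refine forall_congr' fun a => ?_
          by_cases haS : a ∈ S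
          · rw [if_pos haS]
            simp only [haS, iff_true]
            rw [add_comm, Nat.even_add_one, Nat.not_even_iff_odd]
          · rw [if_neg haS]
            simp only [haS, iff_false, zero_add]
            exact Nat.not_odd_iff_even.symm
        by_cases hall : ∀ a : WithBot V, Even ((if a ∈ S then 1 else 0) + ∑ b', n.1 a b')
        · rw [if_pos (hcond.1 hall)]
          rw [show (∏ a : WithBot V, (if Even ((if a ∈ S then 1 else 0) + ∑ b', n.1 a b') then (2:ℝ) else 0))
              = ∏ _a : WithBot V, (2:ℝ) from Finset.prod_congr rfl fun a _ => if_pos (hall a)]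
          rw [Finset.prod_const, Finset.card_univ, mul_comm]
        · rw [if_neg (fun hc => hall (hcond.2 hc))]
          push_neg at hall
          obtain ⟨a, ha⟩ := hall
          refine mul_eq_zero_of_right _ (Finset.prod_eq_zero (Finset.mem_univ a) ?_)
          rw [if_neg ha]

lemma curCore {V : Type*} [Fintype V] [LinearOrder V] (J : V → V → ℝ) (h : ℝ)
    (S : Finset (WithBot V)) :
    (∑ τ : WithBot V → Bool, (∏ a ∈ S, spin (τ a)) *
      Real.exp (∑ a : WithBot V, ∑ b : WithBot V,
        if a < b then Jaug J h a b * spin (τ a) * spin (τ b) else 0))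
    = 2 ^ Fintype.card (WithBot V) * Zcur J h S := by
  classical
  have hexp : ∀ τ : WithBot V → Bool,
      Real.exp (∑ a : WithBot V, ∑ b : WithBot V,
        if a < b then Jaug J h a b * spin (τ a) * spin (τ b) else 0)
      = ∑' m : {p : WithBot V × WithBot V // p.1 < p.2} → ℕ,
          ∏ e : {p : WithBot V × WithBot V // p.1 < p.2},
            (Jaug J h e.1.1 e.1.2 * spin (τ e.1.1) * spin (τ e.1.2)) ^ m e
              / (Nat.factorial (m e)) := by
    intro τ
    rw [Real.exp_sum]
    rw [Finset.prod_congr rfl fun a (_ : a ∈ univ) => Real.exp_sum univ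
      (fun b => if a < b then Jaug J h a b * spin (τ a) * spin (τ b) else 0)]
    rw [Finset.prod_congr rfl fun a (_ : a ∈ univ) => Finset.prod_congr rfl
      fun b (_ : b ∈ univ) => show Real.exp (if a < b then Jaug J h a b * spin (τ a) * spin (τ b) else 0)
        = if a < b then Real.exp (Jaug J h a b * spin (τ a) * spin (τ b)) else 1 from by
          by_cases hab : a < b <;> simp [hab]]
    rw [prod_pairs (fun a b => Real.exp (Jaug J h a b * spin (τ a) * spin (τ b)))]
    rw [Finset.prod_congr rfl fun e (_ : e ∈ univ) => real_exp_tsum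
      (Jaug J h e.1.1 e.1.2 * spin (τ e.1.1) * spin (τ e.1.2))]
    exact ((pi_tsum (fun e : {p : WithBot V × WithBot V // p.1 < p.2} =>
      fun k => (Jaug J h e.1.1 e.1.2 * spin (τ e.1.1) * spin (τ e.1.2)) ^ k / (Nat.factorial k))
      (fun e => summable_norm_pow_div _)).2).symm
  have hsummand : ∀ τ : WithBot V → Bool,
      Summable fun m : {p : WithBot V × WithBot V // p.1 < p.2} → ℕ =>
        (∏ a ∈ S, spin (τ a)) *
          ∏ e : {p : WithBot V × WithBot V // p.1 < p.2},
            (Jaug J h e.1.1 e.1.2 * spin (τ e.1.1) * spin (τ e.1.2)) ^ m e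
              / (Nat.factorial (m e)) := by
    intro τ
    exact Summable.mul_left _ ((pi_tsum (fun e : {p : WithBot V × WithBot V // p.1 < p.2} =>
      fun k => (Jaug J h e.1.1 e.1.2 * spin (τ e.1.1) * spin (τ e.1.2)) ^ k / (Nat.factorial k))
      (fun e => summable_norm_pow_div _)).1.of_norm)
  calc (∑ τ : WithBot V → Bool, (∏ a ∈ S, spin (τ a)) *
      Real.exp (∑ a : WithBot V, ∑ b : WithBot V,
        if a < b then Jaug J h a b * spin (τ a) * spin (τ b) else 0))
      = ∑ τ : WithBot V → Bool, ∑' m : {p : WithBot V × WithBot V // p.1 < p.2} → ℕ,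
          (∏ a ∈ S, spin (τ a)) *
            ∏ e : {p : WithBot V × WithBot V // p.1 < p.2},
              (Jaug J h e.1.1 e.1.2 * spin (τ e.1.1) * spin (τ e.1.2)) ^ m e
                / (Nat.factorial (m e)) := by
        refine Finset.sum_congr rfl fun τ _ => ?_
        rw [hexp τ]
        exact (tsum_mul_left).symm
    _ = ∑' m : {p : WithBot V × WithBot V // p.1 < p.2} → ℕ, ∑ τ : WithBot V → Bool,
          (∏ a ∈ S, spin (τ a)) *
            ∏ e : {p : WithBot V × WithBot V // p.1 < p.2},
              (Jaug J h e.1.1 e.1.2 * spin (τ e.1.1) * spin (τ e.1.2)) ^ m e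
                / (Nat.factorial (m e)) :=
        (Summable.tsum_finsetSum fun τ _ => hsummand τ).symm
    _ = ∑' n : CurSpace (WithBot V), ∑ τ : WithBot V → Bool,
          (∏ a ∈ S, spin (τ a)) *
            ∏ e : {p : WithBot V × WithBot V // p.1 < p.2},
              (Jaug J h e.1.1 e.1.2 * spin (τ e.1.1) * spin (τ e.1.2)) ^ ((curEquiv (WithBot V)) n e)
                / (Nat.factorial ((curEquiv (WithBot V)) n e)) :=
        (Equiv.tsum_eq (curEquiv (WithBot V)) _).symm
    _ = ∑' n : CurSpace (WithBot V), (if curSrc n.1 = S then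
          2 ^ Fintype.card (WithBot V) * curW J h n.1 else 0) := by
        refine tsum_congr fun n => ?_
        refine Eq.trans (Finset.sum_congr rfl fun τ _ => ?_) (curInnerSum J h S n)
        congr 1
        exact (prod_pairs (fun a b =>
          (Jaug J h a b * spin (τ a) * spin (τ b)) ^ n.1 a b / (Nat.factorial (n.1 a b)))).symm
    _ = 2 ^ Fintype.card (WithBot V) * Zcur J h S := by
        rw [show (2:ℝ) ^ Fintype.card (WithBot V) * Zcur J h S
            = ∑' n : CurSpace (WithBot V), (2:ℝ) ^ Fintype.card (WithBot V) *
                (if curSrc n.1 = S then curW J h n.1 else 0) from (tsum_mul_left).symm]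
        exact tsum_congr fun n => by rw [mul_ite, mul_zero]

/-- Random current representation of correlation functions: for `|A|` even,
`⟨σ_A⟩_G = Z_{G_g}(A)/Z_{G_g}(∅)`, and for `|A|` odd,
`⟨σ_A⟩_G = Z_{G_g}(A ∪ {g})/Z_{G_g}(∅)`, where `g = ⊥` is the ghost vertex. -/
theorem random_current_representation {V : Type*} [Fintype V] [LinearOrder V]
    (J : V → V → ℝ) (hJsym : ∀ i j, J i j = J j i) (hJ : ∀ i j, 0 ≤ J i j)
    (h : ℝ) (hh : 0 < h) (A : Finset V) :
    (Even A.card →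
      corr J h A = Zcur J h (A.image (fun i => (i : WithBot V))) / Zcur J h ∅) ∧
    (Odd A.card →
      corr J h A
        = Zcur J h (insert ⊥ (A.image (fun i => (i : WithBot V)))) / Zcur J h ∅) := by
  classical
  have hT : A.image (fun i => (i : WithBot V)) = Finset.image WithBot.some A := by
    ext x
    simp [Finset.instMonad]
  rw [hT]
  set c := Fintype.card (WithBot V) with hc
  let bext : Bool → (V → Bool) → WithBot V → Bool :=
    fun b σ => fun a => WithBot.recBotCoe b σ a
  let hamA : (WithBot V → Bool) → ℝ := fun τ =>
    ∑ a : WithBot V, ∑ b : WithBot V,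
      if a < b then Jaug J h a b * spin (τ a) * spin (τ b) else 0
  have hamext : ∀ σ : V → Bool, hamA (bext true σ) = ham J h σ := by
    intro σ
    show (∑ a : WithBot V, ∑ b : WithBot V,
      if a < b then Jaug J h a b * spin (bext true σ a) * spin (bext true σ b) else 0) = _
    rw [sum_withBot (fun a => ∑ b : WithBot V,
      if a < b then Jaug J h a b * spin (bext true σ a) * spin (bext true σ b) else 0)]
    have hrow0 : (∑ b : WithBot V, if (⊥ : WithBot V) < b then
        Jaug J h ⊥ b * spin (bext true σ ⊥) * spin (bext true σ b) else 0)
        = h * ∑ i : V, spin (σ i) := by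
      rw [sum_withBot (fun b => if (⊥ : WithBot V) < b then
        Jaug J h ⊥ b * spin (bext true σ ⊥) * spin (bext true σ b) else 0)]
      rw [if_neg (lt_irrefl (⊥ : WithBot V)), Finset.mul_sum, zero_add]
      refine Finset.sum_congr rfl fun i _ => ?_
      rw [if_pos (WithBot.bot_lt_coe i)]
      show h * spin true * spin (σ i) = h * spin (σ i)
      simp [spin]
    have hrowi : ∀ i : V, (∑ b : WithBot V, if (↑i : WithBot V) < b then
        Jaug J h (↑i) b * spin (bext true σ ↑i) * spin (bext true σ b) else 0)
        = ∑ j : V, if i < j then J i j * spin (σ i) * spin (σ j) else 0 := by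
      intro i
      rw [sum_withBot (fun b => if (↑i : WithBot V) < b then
        Jaug J h (↑i) b * spin (bext true σ ↑i) * spin (bext true σ b) else 0)]
      rw [if_neg (by simp), zero_add]
      refine Finset.sum_congr rfl fun j _ => ?_
      by_cases hij : i < j
      · rw [if_pos (WithBot.coe_lt_coe.2 hij), if_pos hij]; rfl
      · rw [if_neg (fun hcon => hij (WithBot.coe_lt_coe.1 hcon)), if_neg hij]
    rw [hrow0, Finset.sum_congr rfl fun i _ => hrowi i, ham]
    ring
  let Msum : Finset (WithBot V) → ℝ := fun S =>
    ∑ σ : V → Bool, (∏ a ∈ S, spin (bext true σ a)) * Real.exp (hamA (bext true σ))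
  let eqv : (WithBot V → Bool) ≃ Bool × (V → Bool) :=
    { toFun := fun τ => (τ ⊥, fun i => τ ↑i)
      invFun := fun p => bext p.1 p.2
      left_inv := fun τ => funext fun a => by
        cases a using WithBot.recBotCoe <;> rfl
      right_inv := fun p => rfl }
  have hsplit : ∀ S : Finset (WithBot V), Even S.card →
      (∑ τ : WithBot V → Bool, (∏ a ∈ S, spin (τ a)) * Real.exp (hamA τ))
        = 2 * Msum S := by
    intro S hS
    have h1 : (∑ τ : WithBot V → Bool, (∏ a ∈ S, spin (τ a)) * Real.exp (hamA τ))
        = ∑ p : Bool × (V → Bool),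
            (∏ a ∈ S, spin (bext p.1 p.2 a)) * Real.exp (hamA (bext p.1 p.2)) := by
      refine Fintype.sum_equiv eqv _ _ fun τ => ?_
      have hτ : bext (eqv τ).1 (eqv τ).2 = τ := funext fun a => by
        cases a using WithBot.recBotCoe <;> rfl
      rw [hτ]
    rw [h1, Fintype.sum_prod_type, Fintype.sum_bool]
    show (∑ σ : V → Bool, (∏ a ∈ S, spin (bext true σ a)) * Real.exp (hamA (bext true σ)))
      + (∑ σ : V → Bool, (∏ a ∈ S, spin (bext false σ a)) * Real.exp (hamA (bext false σ)))
      = 2 * Msum S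
    have hflip : (∑ σ : V → Bool,
        (∏ a ∈ S, spin (bext false σ a)) * Real.exp (hamA (bext false σ))) = Msum S := by
      have hf1 : ∀ σ : V → Bool,
          bext false σ = fun a => !(bext true (fun i => !(σ i)) a) := by
        intro σ
        funext a
        cases a using WithBot.recBotCoe <;> simp [bext]
      have hf2 : ∀ τ : WithBot V → Bool,
          (∏ a ∈ S, spin (!(τ a))) * Real.exp (hamA fun a => !(τ a))
          = (-1 : ℝ) ^ S.card * ((∏ a ∈ S, spin (τ a)) * Real.exp (hamA τ)) := by
        intro τ
        have hprod : ∏ a ∈ S, spin (!(τ a)) = (-1 : ℝ) ^ S.card * ∏ a ∈ S, spin (τ a) := by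
          rw [show (∏ a ∈ S, spin (!(τ a))) = ∏ a ∈ S, (-1) * spin (τ a) from
            Finset.prod_congr rfl fun a _ => by rw [spin_not]; ring]
          rw [Finset.prod_mul_distrib, Finset.prod_const]
        have hham : hamA (fun a => !(τ a)) = hamA τ := by
          refine Finset.sum_congr rfl fun a _ => Finset.sum_congr rfl fun b _ => ?_
          by_cases hab : a < b
          · rw [if_pos hab, if_pos hab, spin_not, spin_not]; ring
          · rw [if_neg hab, if_neg hab]
        rw [hprod, hham]
        ring
      calc (∑ σ : V → Bool,
          (∏ a ∈ S, spin (bext false σ a)) * Real.exp (hamA (bext false σ)))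
          = ∑ σ : V → Bool, (-1:ℝ)^S.card *
              ((∏ a ∈ S, spin (bext true (fun i => !(σ i)) a))
                * Real.exp (hamA (bext true fun i => !(σ i)))) := by
            refine Finset.sum_congr rfl fun σ _ => ?_
            rw [hf1 σ]
            exact hf2 (bext true fun i => !(σ i))
        _ = (-1:ℝ)^S.card * ∑ σ : V → Bool,
              (∏ a ∈ S, spin (bext true (fun i => !(σ i)) a))
                * Real.exp (hamA (bext true fun i => !(σ i))) := by
            rw [Finset.mul_sum]
        _ = (-1:ℝ)^S.card * Msum S := by
            congr 1
            exact Fintype.sum_equiv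
              (Function.Involutive.toPerm (fun σ : V → Bool => fun i => !(σ i))
                (fun σ => funext fun i => Bool.not_not _)) _ _ (fun σ => rfl)
        _ = Msum S := by rw [hS.neg_one_pow, one_mul]
    rw [hflip]
    show Msum S + Msum S = 2 * Msum S
    ring
  have hZ : ∀ S : Finset (WithBot V), Even S.card →
      Zcur J h S = 2 / 2 ^ c * Msum S := by
    intro S hS
    have h2c : (2:ℝ) ^ c ≠ 0 := pow_ne_zero _ two_ne_zero
    have hNS : (2:ℝ) ^ c * Zcur J h S = 2 * Msum S := by
      rw [← curCore J h S]
      exact hsplit S hS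
    rw [div_mul_eq_mul_div, eq_div_iff h2c, mul_comm]
    exact hNS
  have hne : (2:ℝ) / 2 ^ c ≠ 0 := by positivity
  have hM0 : Msum ∅ = ∑ σ : V → Bool, Real.exp (ham J h σ) := by
    refine Finset.sum_congr rfl fun σ _ => ?_
    rw [hamext σ, Finset.prod_empty, one_mul]
  constructor
  · intro hA
    have hcard : (Finset.image WithBot.some A).card = A.card :=
      Finset.card_image_of_injective A WithBot.coe_injective
    have hAe : Even (Finset.image WithBot.some A).card := hcard ▸ hA
    have hM1 : Msum (Finset.image WithBot.some A)
        = ∑ σ : V → Bool, (∏ i ∈ A, spin (σ i)) * Real.exp (ham J h σ) := by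
      refine Finset.sum_congr rfl fun σ _ => ?_
      rw [hamext σ]
      congr 1
      rw [Finset.prod_image (fun i _ j _ hij => WithBot.coe_injective hij)]
      rfl
    rw [corr, hZ _ hAe, hZ ∅ (by simp), mul_div_mul_left _ _ hne, hM1, hM0]
  · intro hA
    have hbot : (⊥ : WithBot V) ∉ Finset.image WithBot.some A := by
      simp
    have hcard : (insert ⊥ (Finset.image WithBot.some A)).card = A.card + 1 := by
      rw [Finset.card_insert_of_notMem hbot,
        Finset.card_image_of_injective A WithBot.coe_injective]
    have hAe : Even (insert ⊥ (Finset.image WithBot.some A)).card := by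
      rw [hcard]
      exact hA.add_one
    have hM1 : Msum (insert ⊥ (Finset.image WithBot.some A))
        = ∑ σ : V → Bool, (∏ i ∈ A, spin (σ i)) * Real.exp (ham J h σ) := by
      refine Finset.sum_congr rfl fun σ _ => ?_
      rw [hamext σ]
      congr 1
      rw [Finset.prod_insert hbot, Finset.prod_image (fun i _ j _ hij => WithBot.coe_injective hij)]
      show spin true * _ = _
      rw [show spin true = (1:ℝ) from by simp [spin], one_mul]
      rfl
    rw [corr, hZ _ hAe, hZ ∅ (by simp), mul_div_mul_left _ _ hne, hM1, hM0]
end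
end
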